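/- arXiv:2208.04861 — 2 statements merged into one kernel-verified Lean document; each statement's English description precedes it below -/
import Mathlib

section
/- Let X be a C-contracting quasi-geodesic in Y and let ξ ∈ ∂_hY with ξ ∉ [ΛX]. Then every η ∈ [ξ] satisfies η ∉ [ΛX] and d_X(ξ,η) ≤ 6C. -/
open Metric Filter Topology Set MeasureTheory Pointwise

noncomputable section

namespace ConfDyn

/-- `γ` is (the image of) a geodesic segment from `x` to `y`. -/
def IsGeodesicIn (Y : Type*) [MetricSpace Y] (γ : Set Y) (x y : Y) : Prop :=
  ∃ f : ℝ → Y, f 0 = x ∧ f (dist x y) = y ∧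
    (∀ s ∈ Set.Icc (0 : ℝ) (dist x y), ∀ t ∈ Set.Icc (0 : ℝ) (dist x y),
      dist (f s) (f t) = |s - t|) ∧
    γ = f '' Set.Icc (0 : ℝ) (dist x y)

/-- `Y` is a geodesic metric space. -/
def GeodesicSpace (Y : Type*) [MetricSpace Y] : Prop :=
  ∀ x y : Y, ∃ γ : Set Y, IsGeodesicIn Y γ x y

/-- the shortest projection of the point `y` to the subset `X`. -/
def projSet {Y : Type*} [MetricSpace Y] (X : Set Y) (y : Y) : Set Y :=
  {x ∈ X | dist y x = Metric.infDist y X}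

/-- the shortest projection of the subset `A` to the subset `X`. -/
def projSetOf {Y : Type*} [MetricSpace Y] (X A : Set Y) : Set Y :=
  ⋃ a ∈ A, projSet X a

/-- `d_X(x,y)`, the diameter of `π_X(x) ∪ π_X(y)`. -/
def projDist {Y : Type*} [MetricSpace Y] (X : Set Y) (x y : Y) : ENNReal :=
  EMetric.diam (projSet X x ∪ projSet X y)

/-- `X` is a `C`-contracting subset: any geodesic segment at distance at least `C`
from `X` has shortest projection to `X` of diameter at most `C`. -/
def IsContractingSet {Y : Type*} [MetricSpace Y] (C : ℝ) (X : Set Y) : Prop :=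
  ∀ x y : Y, ∀ γ : Set Y, IsGeodesicIn Y γ x y →
    (∀ p ∈ γ, C ≤ Metric.infDist p X) →
    EMetric.diam (projSetOf X γ) ≤ ENNReal.ofReal C

/-- the Busemann function based at `o` associated to `y`, `b_y(x) = d(x,y) - d(o,y)`. -/
def busemannCM {Y : Type*} [MetricSpace Y] (o y : Y) : C(Y, ℝ) :=
  ⟨fun x => dist x y - dist o y,
    (continuous_id.dist continuous_const).sub continuous_const⟩

/-- the horofunction compactification of `Y`: the closure of `{b_y : y ∈ Y}` in
`C(Y,ℝ)` with the compact-open topology. -/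
def horoCpt (Y : Type*) [MetricSpace Y] (o : Y) : Set C(Y, ℝ) :=
  closure (Set.range (busemannCM o))

/-- `ξ` is a point of the horofunction boundary `∂_h Y`. -/
def IsHoroPoint {Y : Type*} [MetricSpace Y] (o : Y) (ξ : C(Y, ℝ)) : Prop :=
  ξ ∈ horoCpt Y o ∧ ∀ y : Y, ξ ≠ busemannCM o y

/-- a sequence of points of `Y` converges to `ξ` in the horofunction compactification. -/
def HoroConv {Y : Type*} [MetricSpace Y] (o : Y) (u : ℕ → Y) (ξ : C(Y, ℝ)) : Prop :=
  Filter.Tendsto (fun n => busemannCM o (u n)) atTop (nhds ξ)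

/-- two horofunctions have (K-)finite difference for some K. -/
def FinDiff {Y : Type*} [MetricSpace Y] (ξ η : C(Y, ℝ)) : Prop :=
  ∃ K : ℝ, ∀ z : Y, |ξ z - η z| ≤ K

/-- the locus of a subset of the horofunction boundary. -/
def locus {Y : Type*} [MetricSpace Y] (o : Y) (Λ : Set C(Y, ℝ)) : Set C(Y, ℝ) :=
  {η | IsHoroPoint o η ∧ ∃ ξ ∈ Λ, FinDiff ξ η}

/-- the finite-difference relation as a setoid on `C(Y,ℝ)`. -/
def finDiffSetoid (Y : Type*) [MetricSpace Y] : Setoid C(Y, ℝ) where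
  r := FinDiff
  iseqv := ⟨fun ξ => ⟨0, fun z => by simp⟩,
    fun h => h.imp (fun K hK z => by rw [abs_sub_comm]; exact hK z),
    fun h₁ h₂ => by
      obtain ⟨K₁, hK₁⟩ := h₁
      obtain ⟨K₂, hK₂⟩ := h₂
      exact ⟨K₁ + K₂, fun z => (abs_sub_le _ _ _).trans (add_le_add (hK₁ z) (hK₂ z))⟩⟩

/-- the limit set of a subset `X ⊆ Y` in the horofunction boundary. -/
def limitSetOf {Y : Type*} [MetricSpace Y] (o : Y) (X : Set Y) : Set C(Y, ℝ) :=
  {ξ | IsHoroPoint o ξ ∧ ∃ u : ℕ → Y, (∀ n, u n ∈ X) ∧ HoroConv o u ξ}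

/-- accumulation points of a sequence of points of `Y` in the horofunction boundary. -/
def accPoints {Y : Type*} [MetricSpace Y] (o : Y) (u : ℕ → Y) : Set C(Y, ℝ) :=
  {ξ | IsHoroPoint o ξ ∧ ∃ φ : ℕ → ℕ, StrictMono φ ∧ HoroConv o (u ∘ φ) ξ}

/-- `X` is a quasi-geodesic: the image of a quasi-isometric embedding of a real interval. -/
def IsQuasiGeodesicSet {Y : Type*} [MetricSpace Y] (X : Set Y) : Prop :=
  ∃ (c : ℝ) (I : Set ℝ) (φ : ℝ → Y), 1 ≤ c ∧ I.OrdConnected ∧ X = φ '' I ∧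
    ∀ s ∈ I, ∀ t ∈ I,
      (1 / c) * |s - t| - c ≤ dist (φ s) (φ t) ∧ dist (φ s) (φ t) ≤ c * |s - t| + c

section GroupAction

variable {Y : Type*} [MetricSpace Y] {G : Type*} [Group G] [MulAction G Y]

/-- `G` acts by isometries on `Y`. -/
def IsometricAction (G Y : Type*) [Group G] [MulAction G Y] [MetricSpace Y] : Prop :=
  ∀ g : G, Isometry (fun y : Y => g • y)

/-- the action of `G` on `Y` is (metrically) proper. -/
def ProperAction (G Y : Type*) [Group G] [MulAction G Y] [MetricSpace Y] : Prop :=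
  ∀ B : Set Y, Bornology.IsBounded B → Set.Finite {g : G | (g • B) ∩ B ≠ ∅}

/-- `G` is non-elementary: no finite-index subgroup is trivial or infinite cyclic. -/
def NonElementary (G : Type*) [Group G] : Prop :=
  ∀ H : Subgroup G, H.index ≠ 0 → ∀ g : G, H ≠ Subgroup.zpowers g

/-- the orbit of `o` under the cyclic group generated by `f`. -/
def cyclicOrbit (o : Y) (f : G) : Set Y :=
  {y : Y | ∃ n : ℤ, y = f ^ n • o}

/-- `f` is a contracting element with `C`-contracting orbit: it has infinite order,
`n ↦ fⁿ • o` is a quasi-isometric embedding of `ℤ`, and `⟨f⟩ • o` is `C`-contracting. -/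
def IsContractingElt (o : Y) (C : ℝ) (f : G) : Prop :=
  (∀ n : ℤ, n ≠ 0 → f ^ n ≠ 1) ∧
  (∃ c : ℝ, 1 ≤ c ∧ ∀ m n : ℤ,
      (1 / c) * |(m : ℝ) - (n : ℝ)| - c ≤ dist (f ^ m • o) (f ^ n • o) ∧
      dist (f ^ m • o) (f ^ n • o) ≤ c * |(m : ℝ) - (n : ℝ)| + c) ∧
  IsContractingSet C (cyclicOrbit o f)

/-- `f` is a contracting element. -/
def IsContractingEltAny (o : Y) (f : G) : Prop :=
  ∃ C : ℝ, 1 ≤ C ∧ IsContractingElt o C f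

/-- the elementary group `E(f)`: elements moving `⟨f⟩ • o` a finite Hausdorff distance. -/
def EGroup (o : Y) (f : G) : Set G :=
  {g : G | EMetric.hausdorffEdist (g • cyclicOrbit o f) (cyclicOrbit o f) ≠ ⊤}

/-- the axis `Ax(f) = E(f) • o`. -/
def axisOf (o : Y) (f : G) : Set Y :=
  (fun g : G => g • o) '' EGroup o f

/-- the family of all `G`-translated axes of `h` and `k`. -/
def axesPairFam (o : Y) (h k : G) : Set (Set Y) :=
  {S | ∃ g : G, S = g • axisOf o h ∨ S = g • axisOf o k}

/-- `h` and `k` are independent contracting elements: the family of their translated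
axes has bounded projection. -/
def IndepElts (o : Y) (h k : G) : Prop :=
  ∃ B : ℝ, 0 < B ∧ ∀ U ∈ axesPairFam o h k, ∀ V ∈ axesPairFam o h k,
    U ≠ V → EMetric.diam (projSetOf U V) ≤ ENNReal.ofReal B

/-- the family of all `G`-translated axes of the triple `f₁, f₂, f₃`. -/
def axesTripleFam (o : Y) (f₁ f₂ f₃ : G) : Set (Set Y) :=
  {S | ∃ g : G, S = g • axisOf o f₁ ∨ S = g • axisOf o f₂ ∨ S = g • axisOf o f₃}

/-- `F = {f₁,f₂,f₃}` is an admissible triple with constants `C`, `B₀`: three pairwise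
independent contracting elements whose translated axes are `C`-contracting with
`B₀`-bounded projection. -/
def IsAdmissibleTriple (o : Y) (C B₀ : ℝ) (f₁ f₂ f₃ : G) : Prop :=
  f₁ ≠ f₂ ∧ f₁ ≠ f₃ ∧ f₂ ≠ f₃ ∧
  IsContractingEltAny o f₁ ∧ IsContractingEltAny o f₂ ∧ IsContractingEltAny o f₃ ∧
  IndepElts o f₁ f₂ ∧ IndepElts o f₁ f₃ ∧ IndepElts o f₂ f₃ ∧
  (∀ S ∈ axesTripleFam o f₁ f₂ f₃, IsContractingSet C S) ∧
  (∀ U ∈ axesTripleFam o f₁ f₂ f₃, ∀ V ∈ axesTripleFam o f₁ f₂ f₃,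
    U ≠ V → EMetric.diam (projSetOf U V) ≤ ENNReal.ofReal B₀)

/-- the geodesic `γ` contains an `(r,f)`-barrier at `g • o`. -/
def HasBarrier (o : Y) (r : ℝ) (f g : G) (γ : Set Y) : Prop :=
  Metric.infDist (g • o) γ ≤ r ∧ Metric.infDist ((g * f) • o) γ ≤ r

/-- the partial cone `Ω_x^F(g • o, r)`. -/
def partialCone (o x : Y) (f₁ f₂ f₃ : G) (g : G) (r : ℝ) : Set Y :=
  {z | ∃ γ : Set Y, IsGeodesicIn Y γ x z ∧
      (HasBarrier o r f₁ g γ ∨ HasBarrier o r f₂ g γ ∨ HasBarrier o r f₃ g γ)}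

/-- the partial shadow `Π_x^F(g • o, r)`: accumulation points of the partial cone in
the horofunction boundary. -/
def partialShadow (o x : Y) (f₁ f₂ f₃ : G) (g : G) (r : ℝ) : Set C(Y, ℝ) :=
  {ξ | IsHoroPoint o ξ ∧ ∃ u : ℕ → Y, (∀ n, u n ∈ partialCone o x f₁ f₂ f₃ g r) ∧
      HoroConv o u ξ}

/-- `ξ` is an `(r,F)`-conical point. -/
def IsConicalPt (o : Y) (f₁ f₂ f₃ : G) (r : ℝ) (ξ : C(Y, ℝ)) : Prop :=
  ∃ g₀ : G, Set.Infinite {g : G | ξ ∈ partialShadow o (g₀ • o) f₁ f₂ f₃ g r}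

/-- the usual cone `Ω_x(y,r)`. -/
def usualCone (x y : Y) (r : ℝ) : Set Y :=
  {z | ∃ γ : Set Y, IsGeodesicIn Y γ x z ∧ ∃ p ∈ γ, dist p y ≤ r}

/-- the usual shadow `Π_x(y,r)`. -/
def usualShadow (o x y : Y) (r : ℝ) : Set C(Y, ℝ) :=
  {ξ | IsHoroPoint o ξ ∧ ∃ u : ℕ → Y, (∀ n, u n ∈ usualCone x y r) ∧ HoroConv o u ξ}

/-- the set `Λ_c(G)` of conical points of the action. -/
def conicalSet (G : Type*) {Y : Type*} [Group G] [MulAction G Y] [MetricSpace Y]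
    (o : Y) : Set C(Y, ℝ) :=
  {ξ | ∃ r : ℝ, 0 < r ∧ ∃ g₀ : G, ∃ u : ℕ → G,
      Filter.Tendsto (fun n => dist o (u n • o)) atTop atTop ∧
      ∀ n, ξ ∈ usualShadow o (g₀ • o) (u n • o) r}

/-- the attracting fixed-point set `[h⁺]`: the locus of the accumulation points of
`{hⁿ o : n > 0}` in the horofunction boundary. -/
def attrFix (o : Y) (h : G) : Set C(Y, ℝ) :=
  locus o (accPoints o (fun n : ℕ => h ^ (n + 1) • o))

/-- the repelling fixed-point set `[h⁻]`. -/
def repFix (o : Y) (h : G) : Set C(Y, ℝ) :=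
  locus o (accPoints o (fun n : ℕ => h ^ (-(n + 1) : ℤ) • o))

/-- the limit set `Λ G y` of the orbit `G • y` in the horofunction boundary. -/
def orbitLimitSet (G : Type*) {Y : Type*} [Group G] [MulAction G Y] [MetricSpace Y]
    (o y : Y) : Set C(Y, ℝ) :=
  {ξ | IsHoroPoint o ξ ∧ ∃ u : ℕ → G,
      Filter.Tendsto (fun n => busemannCM o (u n • y)) atTop (nhds ξ)}

/-- the action of an isometry `g` on horofunctions. -/
def horoAct [ContinuousConstSMul G Y] (o : Y) (g : G) (ξ : C(Y, ℝ)) : C(Y, ℝ) :=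
  ⟨fun y => ξ (g⁻¹ • y) - ξ (g⁻¹ • o),
    (ξ.continuous.comp (continuous_const_smul g⁻¹)).sub continuous_const⟩

/-- the number of orbit points of `Γ ⊆ G` in the closed ball of radius `R` around `o`. -/
def orbitCount (G : Type*) {Y : Type*} [Group G] [MulAction G Y] [MetricSpace Y]
    (o : Y) (Γ : Set G) (R : ℝ) : ℕ :=
  Nat.card {g : G // g ∈ Γ ∧ dist o (g • o) ≤ R}

/-- the critical exponent `ω_Γ` of a subset `Γ ⊆ G`. -/
def critExp (G : Type*) {Y : Type*} [Group G] [MulAction G Y] [MetricSpace Y]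
    (o : Y) (Γ : Set G) : ℝ :=
  Filter.limsup (fun R : ℝ => Real.log (orbitCount G o Γ R) / R) atTop

/-- an `ω`-dimensional `G`-equivariant conformal density on the horofunction boundary:
a family of finite measures supported on `∂_h Y`, normalized at `o`, `G`-equivariant,
with conformal derivative `dμ_x/dμ_y(ξ) = e^{-ω·B_ξ(x,y)}`. -/
def IsConformalDensity (G : Type*) {Y : Type*} [Group G] [MulAction G Y] [MetricSpace Y]
    [ContinuousConstSMul G Y] [MeasurableSpace C(Y, ℝ)]
    (o : Y) (ω : ℝ) (μ : Y → MeasureTheory.Measure C(Y, ℝ)) : Prop :=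
  (∀ x : Y, MeasureTheory.IsFiniteMeasure (μ x)) ∧
  (∀ x : Y, μ x {ξ : C(Y, ℝ) | ¬ IsHoroPoint o ξ} = 0) ∧
  μ o Set.univ = 1 ∧
  (∀ g : G, ∀ x : Y, MeasureTheory.Measure.map (horoAct o g) (μ x) = μ (g • x)) ∧
  (∀ x y : Y, μ x = (μ y).withDensity
      (fun ξ : C(Y, ℝ) => ENNReal.ofReal (Real.exp (-ω * (ξ x - ξ y)))))

end GroupAction

section Aux

variable {Y : Type*} [MetricSpace Y] [ProperSpace Y]

lemma busemann_apply (o y x : Y) : busemannCM o y x = dist x y - dist o y := rfl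

lemma continuous_busemann (o : Y) : Continuous (busemannCM o) := by
  apply ContinuousMap.continuous_of_continuous_uncurry
  have : (Function.uncurry fun y x => busemannCM o y x) =
      fun p : Y × Y => dist p.2 p.1 - dist o p.1 := rfl
  rw [this]
  exact (continuous_snd.dist continuous_fst).sub (continuous_const.dist continuous_fst)

lemma exists_horoConv (o : Y) {ξ : C(Y, ℝ)} (hξ : IsHoroPoint o ξ) :
    ∃ u : ℕ → Y, HoroConv o u ξ := by
  obtain ⟨g, hg, hgt⟩ := mem_closure_iff_seq_limit.mp hξ.1
  choose u hu using hg
  refine ⟨u, ?_⟩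
  unfold HoroConv
  have : (fun n => busemannCM o (u n)) = g := funext hu
  rw [this]; exact hgt

lemma horoConv_dist_atTop (o : Y) {u : ℕ → Y} {ξ : C(Y, ℝ)}
    (hξ : IsHoroPoint o ξ) (hu : HoroConv o u ξ) :
    Tendsto (fun n => dist o (u n)) atTop atTop := by
  rw [Filter.tendsto_atTop]
  by_contra h
  push_neg at h
  obtain ⟨b, hb⟩ := h
  have hb : ∃ᶠ x in atTop, ¬ b ≤ dist o (u x) := hb.mono fun x hx => not_le.mpr hx
  obtain ⟨φ, hφ, hφb⟩ := Filter.extraction_of_frequently_atTop hb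
  have hmem : ∀ n, u (φ n) ∈ closedBall o b := fun n => by
    have := hφb n
    push_neg at this
    exact Metric.mem_closedBall'.2 this.le
  obtain ⟨x, -, ψ, hψ, hxt⟩ := tendsto_subseq_of_bounded Metric.isBounded_closedBall hmem
  have h1 : Tendsto (fun n => busemannCM o (u (φ (ψ n)))) atTop (𝓝 (busemannCM o x)) :=
    ((continuous_busemann o).tendsto x).comp hxt
  have h2 : Tendsto (fun n => busemannCM o (u (φ (ψ n)))) atTop (𝓝 ξ) :=
    hu.comp (hφ.comp hψ).tendsto_atTop
  exact hξ.2 x (tendsto_nhds_unique h2 h1)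

lemma horoConv_uniform (o : Y) {u : ℕ → Y} {ξ : C(Y, ℝ)} (hu : HoroConv o u ξ) (R : ℝ) :
    ∀ᶠ n in atTop, ∀ x ∈ closedBall o R, dist (ξ x) (busemannCM o (u n) x) < 1 := by
  have h := ContinuousMap.tendsto_iff_forall_isCompact_tendstoUniformlyOn.mp hu
    (closedBall o R) (isCompact_closedBall o R)
  exact (Metric.tendstoUniformlyOn_iff.mp h) 1 one_pos

lemma projSet_nonempty {X : Set Y} (hXcl : IsClosed X) (hne : X.Nonempty) (y : Y) :
    (projSet X y).Nonempty := by
  obtain ⟨z, hz, hd⟩ := hXcl.exists_infDist_eq_dist hne y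
  exact ⟨z, hz, hd.symm⟩

lemma dist_le_of_diam {A : Set Y} {r : ℝ} (hr : 0 ≤ r)
    (h : EMetric.diam A ≤ ENNReal.ofReal r) {a b : Y} (ha : a ∈ A) (hb : b ∈ A) :
    dist a b ≤ r := by
  have h2 := (EMetric.edist_le_diam_of_mem ha hb).trans h
  rw [edist_dist] at h2
  exact (ENNReal.ofReal_le_ofReal_iff hr).mp h2

end Aux

/-- if `ξ ∈ ∂_h Y` lies outside the locus of `Λ X` for a `C`-contracting
quasi-geodesic `X`, then every `η` in the class `[ξ]` also lies outside `[Λ X]` and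
`d_X(ξ, η) ≤ 6C`, i.e. any two boundary projections of `ξ` and `η` to `X` together have
diameter at most `6C`. -/
theorem statement11 {Y : Type*} [MetricSpace Y] [ProperSpace Y]
    (hY : GeodesicSpace Y) (o : Y) (C : ℝ) (hC : 1 ≤ C)
    (X : Set Y) (hXcl : IsClosed X) (hXq : IsQuasiGeodesicSet X)
    (hXcon : IsContractingSet C X)
    (ξ : C(Y, ℝ)) (hξ : IsHoroPoint o ξ) (hξn : ξ ∉ locus o (limitSetOf o X)) :
    ∀ η : C(Y, ℝ), IsHoroPoint o η → FinDiff ξ η →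
      η ∉ locus o (limitSetOf o X) ∧
      ∀ P Q : Set Y,
        (P ⊆ X ∧ EMetric.diam P ≤ ENNReal.ofReal (2 * C) ∧
          ∀ y : ℕ → Y, HoroConv o y ξ → ∀ᶠ n in atTop, projSet X (y n) ⊆ P) →
        (Q ⊆ X ∧ EMetric.diam Q ≤ ENNReal.ofReal (2 * C) ∧
          ∀ y : ℕ → Y, HoroConv o y η → ∀ᶠ n in atTop, projSet X (y n) ⊆ Q) →
        EMetric.diam (P ∪ Q) ≤ ENNReal.ofReal (6 * C) := by
  intro η hη hfd
  obtain ⟨K, hK⟩ := hfd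
  have hK0 : (0 : ℝ) ≤ K := le_trans (abs_nonneg _) (hK o)
  have hC0 : (0 : ℝ) ≤ C := zero_le_one.trans hC
  constructor
  · rintro ⟨hη', ζ, hζ, K₂, hK₂⟩
    refine hξn ⟨hξ, ζ, hζ, K₂ + K, fun w => ?_⟩
    calc |ζ w - ξ w| ≤ |ζ w - η w| + |η w - ξ w| := abs_sub_le _ _ _
      _ ≤ K₂ + K := by
          have h1 := hK₂ w
          have h2 := hK w
          rw [abs_sub_comm] at h2
          linarith
  · rintro P Q ⟨hPX, hPd, hPp⟩ ⟨hQX, hQd, hQp⟩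
    by_cases hXne : X.Nonempty
    swap
    · rw [Set.not_nonempty_iff_eq_empty] at hXne
      have hP0 : P = ∅ := Set.subset_empty_iff.mp (hXne ▸ hPX)
      have hQ0 : Q = ∅ := Set.subset_empty_iff.mp (hXne ▸ hQX)
      rw [hP0, hQ0, Set.union_empty]; exact Metric.ediam_empty.le.trans zero_le'
    obtain ⟨y, hy⟩ := exists_horoConv o hξ
    obtain ⟨z, hz⟩ := exists_horoConv o hη
    have hPy := hPp y hy
    have hQz := hQp z hz
    obtain ⟨n₀, hn₀⟩ := hPy.exists
    obtain ⟨p₀, hp₀⟩ := projSet_nonempty hXcl hXne (y n₀)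
    have hp₀P : p₀ ∈ P := hn₀ hp₀
    obtain ⟨m₀, hm₀⟩ := hQz.exists
    obtain ⟨q₀, hq₀⟩ := projSet_nonempty hXcl hXne (z m₀)
    have hq₀Q : q₀ ∈ Q := hm₀ hq₀
    set R : ℝ := (dist o p₀ + 2 * C) + (dist o q₀ + 2 * C) + 2 * C + K + 3 with hRdef
    have hop₀ : (0 : ℝ) ≤ dist o p₀ := dist_nonneg
    have hoq₀ : (0 : ℝ) ≤ dist o q₀ := dist_nonneg
    have hR0 : 0 ≤ R := by rw [hRdef]; linarith
    obtain ⟨N, hNP, hNb⟩ := (hPy.and (horoConv_uniform o hy R)).exists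
    obtain ⟨M, ⟨hMQ, hMb⟩, hMR⟩ :=
      ((hQz.and (horoConv_uniform o hz R)).and
        ((Filter.tendsto_atTop.mp (horoConv_dist_atTop o hη hz)) R)).exists
    obtain ⟨p', hp'⟩ := projSet_nonempty hXcl hXne (y N)
    obtain ⟨q', hq'⟩ := projSet_nonempty hXcl hXne (z M)
    have hp'P : p' ∈ P := hNP hp'
    have hq'Q : q' ∈ Q := hMQ hq'
    have h2C0 : (0 : ℝ) ≤ 2 * C := by linarith
    obtain ⟨γ, hγ⟩ := hY (y N) (z M)
    have hkey : dist p' q' ≤ C := by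
      by_cases hcase : ∀ w ∈ γ, C ≤ Metric.infDist w X
      · have hdiam := hXcon (y N) (z M) γ hγ hcase
        obtain ⟨f, hf0, hfD, hfiso, hfim⟩ := hγ
        have hyyγ : y N ∈ γ := by
          rw [hfim]; exact ⟨0, ⟨le_refl _, dist_nonneg⟩, hf0⟩
        have hzzγ : z M ∈ γ := by
          rw [hfim]; exact ⟨dist (y N) (z M), ⟨dist_nonneg, le_refl _⟩, hfD⟩
        exact dist_le_of_diam hC0 hdiam (Set.mem_biUnion hyyγ hp') (Set.mem_biUnion hzzγ hq')
      · exfalso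
        push_neg at hcase
        obtain ⟨w₀, hw₀γ, hw₀⟩ := hcase
        obtain ⟨f, hf0, hfD, hfiso, hfim⟩ := hγ
        rw [hfim] at hw₀γ
        obtain ⟨t, ht, hft⟩ := hw₀γ
        have hd1 : dist (y N) w₀ = t := by
          have h := hfiso 0 ⟨le_refl _, dist_nonneg⟩ t ht
          rw [hf0, hft] at h
          rw [h, abs_of_nonpos (by linarith [ht.1] : (0:ℝ) - t ≤ 0)]
          ring
        have hd2 : dist w₀ (z M) = dist (y N) (z M) - t := by
          have h := hfiso t ht (dist (y N) (z M)) ⟨dist_nonneg, le_refl _⟩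
          rw [hft, hfD] at h
          rw [h, abs_of_nonpos (by linarith [ht.2] : t - dist (y N) (z M) ≤ 0)]
          ring
        have hsplit : dist (y N) (z M) = dist (y N) w₀ + dist w₀ (z M) := by
          rw [hd1, hd2]; ring
        -- lower bound
        have hyyp' : dist (y N) p' = Metric.infDist (y N) X := hp'.2
        have hzzq' : dist (z M) q' = Metric.infDist (z M) X := hq'.2
        have hinf1 : Metric.infDist (y N) X ≤ Metric.infDist w₀ X + dist (y N) w₀ :=
          Metric.infDist_le_infDist_add_dist
        have hinf2 : Metric.infDist (z M) X ≤ Metric.infDist w₀ X + dist (z M) w₀ :=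
          Metric.infDist_le_infDist_add_dist
        have hp'p₀ : dist p' p₀ ≤ 2 * C := dist_le_of_diam h2C0 hPd hp'P hp₀P
        have hq'q₀ : dist q' q₀ ≤ 2 * C := dist_le_of_diam h2C0 hQd hq'Q hq₀Q
        have htr1 : dist o (y N) ≤ dist o p' + dist p' (y N) := dist_triangle _ _ _
        have htr1' : dist o p' ≤ dist o p₀ + dist p₀ p' := dist_triangle _ _ _
        have htr2 : dist o (z M) ≤ dist o q' + dist q' (z M) := dist_triangle _ _ _
        have htr2' : dist o q' ≤ dist o q₀ + dist q₀ q' := dist_triangle _ _ _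
        -- upper bound via point on geodesic from o to z M
        obtain ⟨γ₂, hγ₂⟩ := hY o (z M)
        obtain ⟨g, hg0, hgD, hgiso, hgim⟩ := hγ₂
        have hw1 : dist o (g R) = R := by
          have h := hgiso 0 ⟨le_refl _, dist_nonneg⟩ R ⟨hR0, hMR⟩
          rw [hg0] at h
          rw [h, abs_of_nonpos (by linarith : (0:ℝ) - R ≤ 0)]
          ring
        have hw2 : dist (g R) (z M) = dist o (z M) - R := by
          have h := hgiso R ⟨hR0, hMR⟩ (dist o (z M)) ⟨dist_nonneg, le_refl _⟩
          rw [hgD] at h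
          rw [h, abs_of_nonpos (by linarith [hMR] : R - dist o (z M) ≤ 0)]
          ring
        have hwball : g R ∈ closedBall o R := by
          rw [Metric.mem_closedBall, dist_comm, hw1]
        have hbη := hMb (g R) hwball
        have hbξ := hNb (g R) hwball
        rw [Real.dist_eq] at hbη hbξ
        have hbη' := (abs_lt.mp hbη).2
        have hbξ' := (abs_lt.mp hbξ).2
        have hbξ'' := (abs_lt.mp hbξ).1
        have ebzz : busemannCM o (z M) (g R) = -R := by
          rw [busemann_apply, hw2]; ring
        have ebyy : busemannCM o (y N) (g R) = dist (g R) (y N) - dist o (y N) := rfl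
        have hKw := hK (g R)
        rw [ebzz] at hbη'
        rw [ebyy] at hbξ''
        -- b_yy (g R) ≤ ξ (g R) + 1 ≤ η (g R) + K + 1 ≤ -R + K + 2
        have hup : dist (g R) (y N) - dist o (y N) ≤ -R + K + 2 := by
          have h3 := (abs_le.mp (le_of_lt hbξ)).1
          have h4 := (abs_le.mp (hK (g R))).2
          rw [ebyy] at h3
          linarith
        have htri : dist (y N) (z M) ≤ dist (y N) (g R) + dist (g R) (z M) :=
          dist_triangle _ _ _
        have hcomm1 : dist (y N) (g R) = dist (g R) (y N) := dist_comm _ _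
        have hcomm2 : dist (z M) w₀ = dist w₀ (z M) := dist_comm _ _
        have hcomm3 : dist p' (y N) = dist (y N) p' := dist_comm _ _
        have hcomm4 : dist q' (z M) = dist (z M) q' := dist_comm _ _
        have hcomm5 : dist p₀ p' = dist p' p₀ := dist_comm _ _
        have hcomm6 : dist q₀ q' = dist q' q₀ := dist_comm _ _
        have hw₀le : Metric.infDist w₀ X ≤ C := le_of_lt hw₀
        rw [hw2] at htri
        linarith
    -- conclude
    apply EMetric.diam_le
    intro a ha b hb
    rw [edist_dist]
    have h6C : ∀ u v : Y, dist u v ≤ 6 * C → edist u v ≤ ENNReal.ofReal (6 * C) := by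
      intro u v huv
      rw [edist_dist]
      exact ENNReal.ofReal_le_ofReal huv
    have hPQ : ∀ u v : Y, u ∈ P → v ∈ Q → dist u v ≤ 6 * C := by
      intro u v hu hv
      have h1 : dist u p' ≤ 2 * C := dist_le_of_diam h2C0 hPd hu hp'P
      have h2 : dist q' v ≤ 2 * C := dist_le_of_diam h2C0 hQd hq'Q hv
      have h3 := dist_triangle4 u p' q' v
      linarith
    apply ENNReal.ofReal_le_ofReal
    rcases ha with ha | ha <;> rcases hb with hb | hb
    · have := dist_le_of_diam h2C0 hPd ha hb; linarith
    · exact hPQ a b ha hb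
    · have := hPQ b a hb ha; rw [dist_comm]; linarith
    · have := dist_le_of_diam h2C0 hQd ha hb; linarith

end ConfDyn
end
end

section
/- (Shadow Lemma on the horofunction boundary.) Suppose G contains a contracting element and let {μ_x}_{x∈Y} be an ω-dimensional G-equivariant conformal density on ∂_hY for some ω > 0. There exists L > 0 (depending only on C, B₀) such that for every admissible triple F (with constants C, B₀) satisfying min_{f∈F} d(o,fo) ≥ L there exists r₀ > 0 so that for all r ≥ r₀ there are constants c₁ > 0 (independent of r) and c₂ = c₂(r) > 0 with c₁·e^{−ω·d(o,go)} ≤ μ_o(Π_o^F(go,r)) ≤ μ_o(Π_o(go,r)) ≤ c₂·e^{−ω·d(o,go)} for every g ∈ G. -/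
open Metric Filter Topology Set MeasureTheory Pointwise

noncomputable section

namespace ConfDyn

/-! ### Auxiliary development for the Shadow Lemma -/

section ShadowAux

variable {Y : Type*} [MetricSpace Y]

/-- A singleton is a (degenerate) geodesic. -/
lemma isGeodesicIn_singleton (x : Y) : IsGeodesicIn Y {x} x x := by
  refine ⟨fun _ => x, rfl, rfl, ?_, ?_⟩
  · intro s hs t ht
    simp only [dist_self] at hs ht ⊢
    have hs0 : s = 0 := le_antisymm hs.2 hs.1
    have ht0 : t = 0 := le_antisymm ht.2 ht.1
    simp [hs0, ht0]
  · simp [dist_self, Set.Icc_self]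

namespace ShadowGeo

/-- Data of a parametrized geodesic from `x` to `z`. -/
structure Geod (Y : Type*) [MetricSpace Y] (x z : Y) where
  f : ℝ → Y
  h0 : f 0 = x
  hd : f (dist x z) = z
  iso : ∀ s ∈ Set.Icc (0:ℝ) (dist x z), ∀ t ∈ Set.Icc (0:ℝ) (dist x z),
    dist (f s) (f t) = |s - t|

namespace Geod

variable {x z : Y} (g : Geod Y x z)

/-- The geodesic as a set. -/
def set : Set Y := g.f '' Set.Icc (0:ℝ) (dist x z)

lemma isGeodesicIn : IsGeodesicIn Y g.set x z := ⟨g.f, g.h0, g.hd, g.iso, rfl⟩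

lemma mem_set {t : ℝ} (ht : t ∈ Set.Icc (0:ℝ) (dist x z)) : g.f t ∈ g.set :=
  Set.mem_image_of_mem _ ht

lemma mem_left : x ∈ g.set := by
  have := g.mem_set (t := 0) ⟨le_refl _, dist_nonneg⟩
  rwa [g.h0] at this

lemma mem_right : z ∈ g.set := by
  have := g.mem_set (t := dist x z) ⟨dist_nonneg, le_refl _⟩
  rwa [g.hd] at this

lemma dist_eq {s t : ℝ} (hs : s ∈ Set.Icc (0:ℝ) (dist x z))
    (ht : t ∈ Set.Icc (0:ℝ) (dist x z)) : dist (g.f s) (g.f t) = |s - t| :=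
  g.iso s hs t ht

lemma dist_left {t : ℝ} (ht : t ∈ Set.Icc (0:ℝ) (dist x z)) : dist x (g.f t) = t := by
  have := g.iso 0 ⟨le_refl _, dist_nonneg⟩ t ht
  rw [g.h0] at this
  rw [this, abs_of_nonpos (by linarith [ht.1]), neg_sub, sub_zero]

lemma dist_right {t : ℝ} (ht : t ∈ Set.Icc (0:ℝ) (dist x z)) :
    dist (g.f t) z = dist x z - t := by
  have := g.iso t ht (dist x z) ⟨dist_nonneg, le_refl _⟩
  rw [g.hd] at this
  rw [this, abs_of_nonpos (by linarith [ht.2])]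
  ring

/-- Subsegments are geodesics. -/
lemma sub {t₁ t₂ : ℝ} (h0 : 0 ≤ t₁) (h12 : t₁ ≤ t₂) (h2d : t₂ ≤ dist x z) :
    IsGeodesicIn Y (g.f '' Set.Icc t₁ t₂) (g.f t₁) (g.f t₂) := by
  have ht₁ : t₁ ∈ Set.Icc (0:ℝ) (dist x z) := ⟨h0, le_trans h12 h2d⟩
  have ht₂ : t₂ ∈ Set.Icc (0:ℝ) (dist x z) := ⟨le_trans h0 h12, h2d⟩
  have hdist : dist (g.f t₁) (g.f t₂) = t₂ - t₁ := by
    rw [g.dist_eq ht₁ ht₂, abs_of_nonpos (by linarith)]; ring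
  refine ⟨fun s => g.f (t₁ + s), by simp, by rw [hdist]; ring_nf, ?_, ?_⟩
  · intro s hs t ht
    rw [hdist] at hs ht
    have hs' : t₁ + s ∈ Set.Icc (0:ℝ) (dist x z) :=
      ⟨by linarith [hs.1], by linarith [hs.2]⟩
    have ht' : t₁ + t ∈ Set.Icc (0:ℝ) (dist x z) :=
      ⟨by linarith [ht.1], by linarith [ht.2]⟩
    rw [g.dist_eq hs' ht']
    congr 1; ring
  · rw [hdist]
    ext y
    constructor
    · rintro ⟨s, hs, rfl⟩
      exact ⟨s - t₁, ⟨by linarith [hs.1], by linarith [hs.2]⟩, by ring_nf⟩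
    · rintro ⟨s, hs, rfl⟩
      exact ⟨t₁ + s, ⟨by linarith [hs.1], by linarith [hs.2]⟩, rfl⟩

end Geod

/-- Get a parametrized geodesic from the geodesic space hypothesis. -/
lemma exists_geod (hY : GeodesicSpace Y) (x z : Y) : Nonempty (Geod Y x z) := by
  obtain ⟨γ, f, h0, hd, hiso, -⟩ := hY x z
  exact ⟨⟨f, h0, hd, hiso⟩⟩

end ShadowGeo

/-- A contracting quasi-axis: the data we extract from a contracting element. -/
structure Axis (Y : Type*) [MetricSpace Y] where
  pt : ℤ → Y
  c : ℝ
  C1 : ℝ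
  hc : 1 ≤ c
  hC : 1 ≤ C1
  lower : ∀ m n : ℤ, (1/c) * |(m:ℝ) - (n:ℝ)| - c ≤ dist (pt m) (pt n)
  upper : ∀ m n : ℤ, dist (pt m) (pt n) ≤ c * |(m:ℝ) - (n:ℝ)| + c
  contr : IsContractingSet C1 (Set.range pt)

namespace Axis

variable {Y : Type*} [MetricSpace Y] (ax : Axis Y)

/-- The axis as a subset. -/
def A : Set Y := Set.range ax.pt

lemma pt_mem (n : ℤ) : ax.pt n ∈ ax.A := Set.mem_range_self n

lemma A_nonempty : ax.A.Nonempty := ⟨ax.pt 0, ax.pt_mem 0⟩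

lemma c_pos : (0:ℝ) < ax.c := lt_of_lt_of_le zero_lt_one ax.hc

lemma C1_pos : (0:ℝ) < ax.C1 := lt_of_lt_of_le zero_lt_one ax.hC

/-- Index separation bound from metric proximity. -/
lemma index_bound {m n : ℤ} {R : ℝ} (h : dist (ax.pt m) (ax.pt n) ≤ R) :
    |(m:ℝ) - (n:ℝ)| ≤ ax.c * (R + ax.c) := by
  have h1 := ax.lower m n
  have hc := ax.c_pos
  have h2 : (1/ax.c) * |(m:ℝ) - (n:ℝ)| ≤ R + ax.c := by linarith
  calc |(m:ℝ) - (n:ℝ)| = ax.c * ((1/ax.c) * |(m:ℝ) - (n:ℝ)|) := by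
        field_simp
    _ ≤ ax.c * (R + ax.c) := by
        apply mul_le_mul_of_nonneg_left h2 (le_of_lt hc)

/-- The axis is closed (it is metrically proper). -/
lemma A_closed : IsClosed ax.A := by
  rw [← isSeqClosed_iff_isClosed]
  intro u y hu huy
  obtain ⟨k₀, hk₀⟩ := Filter.eventually_atTop.mp
    (Metric.tendsto_nhds.mp huy 1 zero_lt_one)
  choose nn hnn using fun k => (hu k : u k ∈ Set.range ax.pt)
  have hmem : ∀ k, k₀ ≤ k → u k ∈
      ax.pt '' (Set.Icc (nn k₀ - ⌈ax.c * (2 + ax.c)⌉) (nn k₀ + ⌈ax.c * (2 + ax.c)⌉)) := by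
    intro k hk
    have h3 : dist (ax.pt (nn k)) (ax.pt (nn k₀)) ≤ 2 := by
      rw [hnn k, hnn k₀]
      calc dist (u k) (u k₀) ≤ dist (u k) y + dist (u k₀) y := dist_triangle_right _ _ _
        _ ≤ 2 := by linarith [le_of_lt (hk₀ k hk), le_of_lt (hk₀ k₀ (le_refl _))]
    have h4 := ax.index_bound h3
    have hce := Int.le_ceil (ax.c * (2 + ax.c))
    rw [abs_le] at h4
    refine ⟨nn k, Set.mem_Icc.mpr ⟨?_, ?_⟩, hnn k⟩
    · have h5 : ((nn k₀ - ⌈ax.c * (2 + ax.c)⌉ : ℤ) : ℝ) ≤ ((nn k : ℤ) : ℝ) := by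
        push_cast; linarith [h4.1]
      exact_mod_cast h5
    · have h5 : ((nn k : ℤ) : ℝ) ≤ ((nn k₀ + ⌈ax.c * (2 + ax.c)⌉ : ℤ) : ℝ) := by
        push_cast; linarith [h4.2]
      exact_mod_cast h5
  have hSfin : (ax.pt ''
      (Set.Icc (nn k₀ - ⌈ax.c * (2 + ax.c)⌉) (nn k₀ + ⌈ax.c * (2 + ax.c)⌉))).Finite :=
    (Set.finite_Icc _ _).image _
  have hy : y ∈ ax.pt ''
      (Set.Icc (nn k₀ - ⌈ax.c * (2 + ax.c)⌉) (nn k₀ + ⌈ax.c * (2 + ax.c)⌉)) := by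
    have huy' : Filter.Tendsto (fun k => u (k + k₀)) Filter.atTop (𝓝 y) :=
      huy.comp (Filter.tendsto_add_atTop_nat k₀)
    exact hSfin.isClosed.mem_of_tendsto huy'
      (Filter.Eventually.of_forall fun k => hmem _ (Nat.le_add_left _ _))
  obtain ⟨n, -, hn⟩ := hy
  exact ⟨n, hn⟩

/-- Projections to the axis are nonempty (in a proper space). -/
lemma proj_nonempty [ProperSpace Y] (z : Y) : (projSet ax.A z).Nonempty := by
  obtain ⟨w, hw, hdist⟩ := ax.A_closed.exists_infDist_eq_dist ax.A_nonempty z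
  exact ⟨w, hw, hdist.symm⟩

lemma proj_dist_eq {z w : Y} (h : w ∈ projSet ax.A z) : dist z w = Metric.infDist z ax.A := h.2

lemma proj_mem_A {z w : Y} (h : w ∈ projSet ax.A z) : w ∈ ax.A := h.1

lemma self_proj (n : ℤ) : ax.pt n ∈ projSet ax.A (ax.pt n) :=
  ⟨ax.pt_mem n, by rw [dist_self, Metric.infDist_zero_of_mem (ax.pt_mem n)]⟩

/-- Converted form of the contraction property. -/
lemma contr' {x z : Y} {γ : Set Y} (hγ : IsGeodesicIn Y γ x z)
    (hfar : ∀ p ∈ γ, ax.C1 ≤ Metric.infDist p ax.A) :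
    ∀ p ∈ projSetOf ax.A γ, ∀ q ∈ projSetOf ax.A γ, dist p q ≤ ax.C1 := by
  intro p hp q hq
  have hdiam := ax.contr x z γ hγ hfar
  have h1 : edist p q ≤ EMetric.diam (projSetOf ax.A γ) := EMetric.edist_le_diam_of_mem hp hq
  have h2 : ENNReal.ofReal (dist p q) ≤ ENNReal.ofReal ax.C1 := by
    rw [← edist_dist]; exact le_trans h1 hdiam
  rwa [ENNReal.ofReal_le_ofReal_iff (le_of_lt ax.C1_pos)] at h2

lemma mem_projSetOf {γ : Set Y} {a w : Y} (ha : a ∈ γ) (hw : w ∈ projSet ax.A a) :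
    w ∈ projSetOf ax.A γ := Set.mem_biUnion ha hw

/-- Diameter bound for a single point's projection set. -/
lemma proj_diam [ProperSpace Y] {z : Y} {p q : Y}
    (hp : p ∈ projSet ax.A z) (hq : q ∈ projSet ax.A z) : dist p q ≤ 2 * ax.C1 := by
  by_cases h : ax.C1 ≤ Metric.infDist z ax.A
  · have hγ := isGeodesicIn_singleton z
    have hfar : ∀ w ∈ ({z} : Set Y), ax.C1 ≤ Metric.infDist w ax.A := by
      intro w hw; rw [Set.mem_singleton_iff] at hw; rwa [hw]
    have := ax.contr' hγ hfar p (ax.mem_projSetOf rfl hp) q (ax.mem_projSetOf rfl hq)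
    linarith [ax.C1_pos]
  · push_neg at h
    calc dist p q ≤ dist p z + dist z q := dist_triangle p z q
      _ = Metric.infDist z ax.A + Metric.infDist z ax.A := by
          rw [dist_comm p z, ax.proj_dist_eq hp, ax.proj_dist_eq hq]
      _ ≤ 2 * ax.C1 := by linarith

open ShadowGeo in
/-- Core geometric lemma: entry point, exit point and tube property for a geodesic
meeting the `C₁`-neighbourhood of the axis. -/
lemma coreGeo [ProperSpace Y] {x z : Y} (g : Geod Y x z)
    (hT : ∃ t ∈ Set.Icc (0:ℝ) (dist x z), Metric.infDist (g.f t) ax.A ≤ ax.C1) :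
    ∃ t₁ t₂ : ℝ, t₁ ∈ Set.Icc (0:ℝ) (dist x z) ∧ t₂ ∈ Set.Icc (0:ℝ) (dist x z) ∧ t₁ ≤ t₂ ∧
      Metric.infDist (g.f t₁) ax.A ≤ ax.C1 ∧ Metric.infDist (g.f t₂) ax.A ≤ ax.C1 ∧
      (∀ u ∈ projSet ax.A x, dist (g.f t₁) u ≤ 2 * ax.C1) ∧
      (∀ v ∈ projSet ax.A z, dist (g.f t₂) v ≤ 2 * ax.C1) ∧
      (∀ t ∈ Set.Icc t₁ t₂, Metric.infDist (g.f t) ax.A ≤ 4 * ax.C1) := by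
  have hC1 := ax.C1_pos
  set d := dist x z with hdd
  have hd0 : 0 ≤ d := dist_nonneg
  have hclamp_mem : ∀ t : ℝ, max 0 (min t d) ∈ Set.Icc (0:ℝ) d := by
    intro t
    exact ⟨le_max_left _ _, max_le hd0 (min_le_right _ _)⟩
  have hclamp_eq : ∀ t ∈ Set.Icc (0:ℝ) d, max 0 (min t d) = t := by
    intro t ht
    rw [min_eq_left ht.2]
    exact max_eq_right ht.1
  have hclampLip : LipschitzWith 1 (fun t : ℝ => max 0 (min t d)) := by
    have h2 := (LipschitzWith.id.min_const d).max_const 0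
    have he : (fun t : ℝ => max 0 (min t d)) = fun t : ℝ => (min t d) ⊔ 0 := by
      funext t; rw [max_comm]
    rw [he]; exact h2
  have hLip : LipschitzWith 1 (fun t => g.f (max 0 (min t d))) := by
    apply LipschitzWith.of_dist_le_mul
    intro s t
    have h1 := hclampLip.dist_le_mul s t
    have h2 : dist (g.f (max 0 (min s d))) (g.f (max 0 (min t d))) =
        dist (max 0 (min s d)) (max 0 (min t d)) := by
      rw [g.dist_eq (hclamp_mem s) (hclamp_mem t), Real.dist_eq]
    rw [h2]; exact h1
  set φ : ℝ → ℝ := fun t => Metric.infDist (g.f (max 0 (min t d))) ax.A with hφ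
  have φcont : Continuous φ := ((Metric.lipschitz_infDist_pt ax.A).comp hLip).continuous
  have hφeq : ∀ t ∈ Set.Icc (0:ℝ) d, φ t = Metric.infDist (g.f t) ax.A := by
    intro t ht; simp only [hφ, hclamp_eq t ht]
  set T : Set ℝ := {t | t ∈ Set.Icc (0:ℝ) d ∧ φ t ≤ ax.C1} with hTdef
  have hTsub : T ⊆ Set.Icc (0:ℝ) d := fun t ht => ht.1
  have hTclosed : IsClosed T := by
    have : T = Set.Icc (0:ℝ) d ∩ φ ⁻¹' (Set.Iic ax.C1) := by
      ext t; simp only [hTdef, Set.mem_setOf_eq, Set.mem_inter_iff, Set.mem_preimage,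
        Set.mem_Iic]
    rw [this]
    exact isClosed_Icc.inter (IsClosed.preimage φcont isClosed_Iic)
  have hTcpt : IsCompact T := isCompact_Icc.of_isClosed_subset hTclosed hTsub
  have hTne : T.Nonempty := by
    obtain ⟨t, ht, htc⟩ := hT
    exact ⟨t, ht, by rw [hφeq t ht]; exact htc⟩
  set t₁ := sInf T with ht₁def
  set t₂ := sSup T with ht₂def
  have ht₁T : t₁ ∈ T := hTcpt.sInf_mem hTne
  have ht₂T : t₂ ∈ T := hTcpt.sSup_mem hTne
  have hbdd : BddBelow T := hTcpt.bddBelow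
  have hbdd' : BddAbove T := hTcpt.bddAbove
  have ht₁₂ : t₁ ≤ t₂ := csInf_le_csSup hTne hbdd hbdd'
  -- limit trick: a point approached by C1-far points is C1-far
  have hge : ∀ s₀ a b : ℝ, a ≤ s₀ → s₀ ≤ b → (∀ s, a ≤ s → s < s₀ → ax.C1 < φ s) →
      (∀ s, s₀ < s → s ≤ b → ax.C1 < φ s) → (a < s₀ ∨ s₀ < b) → ax.C1 ≤ φ s₀ := by
    intro s₀ a b ha hb hleft hright hor
    by_contra h'
    push_neg at h'
    obtain ⟨ε, hε, hball⟩ := Metric.isOpen_iff.mp (IsOpen.preimage φcont isOpen_Iio)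
      s₀ (by simpa using h')
    rcases hor with h | h
    · have hlt : max a (s₀ - ε/2) < s₀ := max_lt h (by linarith)
      have hs' : max a (s₀ - ε/2) ∈ Metric.ball s₀ ε := by
        rw [Metric.mem_ball, Real.dist_eq, abs_lt]
        constructor
        · have : s₀ - ε/2 ≤ max a (s₀ - ε/2) := le_max_right _ _
          linarith
        · linarith
      have h1 : ax.C1 < φ (max a (s₀ - ε/2)) := hleft _ (le_max_left _ _) hlt
      have h2 : φ (max a (s₀ - ε/2)) < ax.C1 := by have := hball hs'; simpa using this
      linarith
    · have hgt : s₀ < min b (s₀ + ε/2) := lt_min h (by linarith)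
      have hs' : min b (s₀ + ε/2) ∈ Metric.ball s₀ ε := by
        rw [Metric.mem_ball, Real.dist_eq, abs_lt]
        constructor
        · linarith
        · have : min b (s₀ + ε/2) ≤ s₀ + ε/2 := min_le_right _ _
          linarith
      have h1 : ax.C1 < φ (min b (s₀ + ε/2)) := hright _ hgt (min_le_left _ _)
      have h2 : φ (min b (s₀ + ε/2)) < ax.C1 := by have := hball hs'; simpa using this
      linarith
  -- entry estimate
  have entry : ∀ u ∈ projSet ax.A x, dist (g.f t₁) u ≤ 2 * ax.C1 := by
    intro u hu
    rcases eq_or_lt_of_le (ht₁T.1.1 : (0:ℝ) ≤ t₁) with h0 | h0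
    · have h1 : φ t₁ ≤ ax.C1 := ht₁T.2
      rw [hφeq t₁ ht₁T.1, ← h0, g.h0] at h1
      have h2 : dist x u ≤ ax.C1 := by rw [ax.proj_dist_eq hu]; exact h1
      rw [← h0, g.h0]
      linarith
    · have hsub := g.sub (le_refl (0:ℝ)) (le_of_lt h0) ht₁T.1.2
      rw [g.h0] at hsub
      have hfar : ∀ p ∈ g.f '' Set.Icc (0:ℝ) t₁, ax.C1 ≤ Metric.infDist p ax.A := by
        rintro - ⟨s, hs, rfl⟩
        have hsIcc : s ∈ Set.Icc (0:ℝ) d := ⟨hs.1, le_trans hs.2 ht₁T.1.2⟩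
        have hnotT : ∀ s', 0 ≤ s' → s' < t₁ → ax.C1 < φ s' := by
          intro s' h1 h2
          by_contra hcon
          push_neg at hcon
          have hmem : s' ∈ T := ⟨⟨h1, le_trans (le_of_lt h2) ht₁T.1.2⟩, hcon⟩
          have := csInf_le hbdd hmem
          linarith
        rw [← hφeq s hsIcc]
        rcases eq_or_lt_of_le hs.2 with h | h
        · rw [h]
          exact hge t₁ 0 t₁ (le_of_lt h0) (le_refl _) hnotT
            (fun s' h1 h2 => absurd (lt_of_lt_of_le h1 h2) (lt_irrefl _)) (Or.inl h0)
        · exact le_of_lt (hnotT s hs.1 h)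
      obtain ⟨v, hv⟩ := ax.proj_nonempty (g.f t₁)
      have hx_mem : x ∈ g.f '' Set.Icc (0:ℝ) t₁ := ⟨0, ⟨le_refl _, le_of_lt h0⟩, g.h0⟩
      have ht₁_mem : g.f t₁ ∈ g.f '' Set.Icc (0:ℝ) t₁ := ⟨t₁, ⟨le_of_lt h0, le_refl _⟩, rfl⟩
      have hdupv := ax.contr' hsub hfar u (ax.mem_projSetOf hx_mem hu) v
        (ax.mem_projSetOf ht₁_mem hv)
      have hdv : dist (g.f t₁) v ≤ ax.C1 := by
        rw [ax.proj_dist_eq hv, ← hφeq t₁ ht₁T.1]; exact ht₁T.2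
      calc dist (g.f t₁) u ≤ dist (g.f t₁) v + dist v u := dist_triangle _ _ _
        _ ≤ ax.C1 + ax.C1 := add_le_add hdv (by rw [dist_comm]; exact hdupv)
        _ = 2 * ax.C1 := by ring
  -- exit estimate
  have exit : ∀ v ∈ projSet ax.A z, dist (g.f t₂) v ≤ 2 * ax.C1 := by
    intro u hu
    rcases eq_or_lt_of_le (ht₂T.1.2 : t₂ ≤ d) with h0 | h0
    · have h1 : φ t₂ ≤ ax.C1 := ht₂T.2
      rw [hφeq t₂ ht₂T.1, h0, g.hd] at h1
      have h2 : dist z u ≤ ax.C1 := by rw [ax.proj_dist_eq hu]; exact h1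
      rw [h0, g.hd]
      linarith
    · have hsub := g.sub ht₂T.1.1 (le_of_lt h0) (le_refl d)
      rw [g.hd] at hsub
      have hfar : ∀ p ∈ g.f '' Set.Icc t₂ d, ax.C1 ≤ Metric.infDist p ax.A := by
        rintro - ⟨s, hs, rfl⟩
        have hsIcc : s ∈ Set.Icc (0:ℝ) d := ⟨le_trans ht₂T.1.1 hs.1, hs.2⟩
        have hnotT : ∀ s', t₂ < s' → s' ≤ d → ax.C1 < φ s' := by
          intro s' h1 h2
          by_contra hcon
          push_neg at hcon
          have hmem : s' ∈ T := ⟨⟨le_trans ht₂T.1.1 (le_of_lt h1), h2⟩, hcon⟩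
          have := le_csSup hbdd' hmem
          linarith
        rw [← hφeq s hsIcc]
        rcases eq_or_lt_of_le hs.1 with h | h
        · rw [← h]
          exact hge t₂ t₂ d (le_refl _) ht₂T.1.2
            (fun s' h1 h2 => absurd (lt_of_le_of_lt h1 h2) (lt_irrefl _)) hnotT (Or.inr h0)
        · exact le_of_lt (hnotT s h hs.2)
      obtain ⟨v, hv⟩ := ax.proj_nonempty (g.f t₂)
      have hz_mem : z ∈ g.f '' Set.Icc t₂ d := ⟨d, ⟨le_of_lt h0, le_refl _⟩, g.hd⟩
      have ht₂_mem : g.f t₂ ∈ g.f '' Set.Icc t₂ d := ⟨t₂, ⟨le_refl _, le_of_lt h0⟩, rfl⟩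
      have hdupv := ax.contr' hsub hfar u (ax.mem_projSetOf hz_mem hu) v
        (ax.mem_projSetOf ht₂_mem hv)
      have hdv : dist (g.f t₂) v ≤ ax.C1 := by
        rw [ax.proj_dist_eq hv, ← hφeq t₂ ht₂T.1]; exact ht₂T.2
      calc dist (g.f t₂) u ≤ dist (g.f t₂) v + dist v u := dist_triangle _ _ _
        _ ≤ ax.C1 + ax.C1 := add_le_add hdv (by rw [dist_comm]; exact hdupv)
        _ = 2 * ax.C1 := by ring
  -- tube estimate
  have tube : ∀ t ∈ Set.Icc t₁ t₂, Metric.infDist (g.f t) ax.A ≤ 4 * ax.C1 := by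
    intro t ht
    have htIcc : t ∈ Set.Icc (0:ℝ) d := ⟨le_trans ht₁T.1.1 ht.1, le_trans ht.2 ht₂T.1.2⟩
    rw [← hφeq t htIcc]
    by_cases hcc : φ t ≤ ax.C1
    · linarith
    push_neg at hcc
    set T₁ : Set ℝ := {s | s ∈ Set.Icc t₁ t ∧ φ s ≤ ax.C1} with hT₁def
    set T₂ : Set ℝ := {s | s ∈ Set.Icc t t₂ ∧ φ s ≤ ax.C1} with hT₂def
    have hT₁closed : IsClosed T₁ := by
      have : T₁ = Set.Icc t₁ t ∩ φ ⁻¹' (Set.Iic ax.C1) := by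
        ext s; simp only [hT₁def, Set.mem_setOf_eq, Set.mem_inter_iff, Set.mem_preimage,
          Set.mem_Iic]
      rw [this]; exact isClosed_Icc.inter (IsClosed.preimage φcont isClosed_Iic)
    have hT₂closed : IsClosed T₂ := by
      have : T₂ = Set.Icc t t₂ ∩ φ ⁻¹' (Set.Iic ax.C1) := by
        ext s; simp only [hT₂def, Set.mem_setOf_eq, Set.mem_inter_iff, Set.mem_preimage,
          Set.mem_Iic]
      rw [this]; exact isClosed_Icc.inter (IsClosed.preimage φcont isClosed_Iic)
    have hT₁cpt : IsCompact T₁ := isCompact_Icc.of_isClosed_subset hT₁closed (fun s hs => hs.1)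
    have hT₂cpt : IsCompact T₂ := isCompact_Icc.of_isClosed_subset hT₂closed (fun s hs => hs.1)
    have hT₁ne : T₁.Nonempty := ⟨t₁, ⟨le_refl _, ht.1⟩, ht₁T.2⟩
    have hT₂ne : T₂.Nonempty := ⟨t₂, ⟨ht.2, le_refl _⟩, ht₂T.2⟩
    set σ₁ := sSup T₁ with hσ₁def
    set σ₂ := sInf T₂ with hσ₂def
    have hσ₁T : σ₁ ∈ T₁ := hT₁cpt.sSup_mem hT₁ne
    have hσ₂T : σ₂ ∈ T₂ := hT₂cpt.sInf_mem hT₂ne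
    have hσ₁lt : σ₁ < t := lt_of_le_of_ne hσ₁T.1.2 (by
      intro h; rw [h] at hσ₁T; exact absurd hσ₁T.2 (not_le.mpr hcc))
    have hσ₂gt : t < σ₂ := lt_of_le_of_ne hσ₂T.1.1 (by
      intro h; rw [← h] at hσ₂T; exact absurd hσ₂T.2 (not_le.mpr hcc))
    have hσ₁₂ : σ₁ < σ₂ := lt_trans hσ₁lt hσ₂gt
    have hσ₁Icc : σ₁ ∈ Set.Icc (0:ℝ) d :=
      ⟨le_trans ht₁T.1.1 hσ₁T.1.1, le_trans (le_of_lt hσ₁lt) htIcc.2⟩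
    have hσ₂Icc : σ₂ ∈ Set.Icc (0:ℝ) d :=
      ⟨le_trans htIcc.1 (le_of_lt hσ₂gt), le_trans hσ₂T.1.2 ht₂T.1.2⟩
    have hleftfar : ∀ s, t ≤ s → s < σ₂ → ax.C1 < φ s := by
      intro s h1 h2
      by_contra hcon
      push_neg at hcon
      have hmem : s ∈ T₂ := ⟨⟨h1, le_trans (le_of_lt h2) hσ₂T.1.2⟩, hcon⟩
      have := csInf_le hT₂cpt.bddBelow hmem
      linarith
    have hrightfar : ∀ s, σ₁ < s → s ≤ t → ax.C1 < φ s := by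
      intro s h1 h2
      by_contra hcon
      push_neg at hcon
      have hmem : s ∈ T₁ := ⟨⟨le_trans hσ₁T.1.1 (le_of_lt h1), h2⟩, hcon⟩
      have := le_csSup hT₁cpt.bddAbove hmem
      linarith
    have hmid : ∀ s, σ₁ < s → s < σ₂ → ax.C1 < φ s := by
      intro s h1 h2
      rcases le_or_gt s t with h | h
      · exact hrightfar s h1 h
      · exact hleftfar s (le_of_lt h) h2
    have hfar : ∀ p ∈ g.f '' Set.Icc σ₁ σ₂, ax.C1 ≤ Metric.infDist p ax.A := by
      rintro - ⟨s, hs, rfl⟩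
      have hsIcc : s ∈ Set.Icc (0:ℝ) d := ⟨le_trans hσ₁Icc.1 hs.1, le_trans hs.2 hσ₂Icc.2⟩
      rw [← hφeq s hsIcc]
      rcases eq_or_lt_of_le hs.1 with h | h
      · rw [← h]
        exact hge σ₁ σ₁ t (le_refl _) (le_of_lt hσ₁lt)
          (fun s' h1 h2 => absurd (lt_of_le_of_lt h1 h2) (lt_irrefl _)) hrightfar
          (Or.inr hσ₁lt)
      · rcases eq_or_lt_of_le hs.2 with h2 | h2
        · rw [h2]
          exact hge σ₂ t σ₂ (le_of_lt hσ₂gt) (le_refl _) hleftfar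
            (fun s' h1' h2' => absurd (lt_of_lt_of_le h1' h2') (lt_irrefl _))
            (Or.inl hσ₂gt)
        · exact le_of_lt (hmid s h h2)
    have hsub := g.sub hσ₁Icc.1 (le_of_lt hσ₁₂) hσ₂Icc.2
    obtain ⟨u₁, hu₁⟩ := ax.proj_nonempty (g.f σ₁)
    obtain ⟨u₂, hu₂⟩ := ax.proj_nonempty (g.f σ₂)
    have hσ₁mem : g.f σ₁ ∈ g.f '' Set.Icc σ₁ σ₂ := ⟨σ₁, ⟨le_refl _, le_of_lt hσ₁₂⟩, rfl⟩
    have hσ₂mem : g.f σ₂ ∈ g.f '' Set.Icc σ₁ σ₂ := ⟨σ₂, ⟨le_of_lt hσ₁₂, le_refl _⟩, rfl⟩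
    have hd12 := ax.contr' hsub hfar u₁ (ax.mem_projSetOf hσ₁mem hu₁) u₂
      (ax.mem_projSetOf hσ₂mem hu₂)
    have hgu₁ : dist (g.f σ₁) u₁ ≤ ax.C1 := by
      rw [ax.proj_dist_eq hu₁, ← hφeq σ₁ hσ₁Icc]; exact hσ₁T.2
    have hgu₂ : dist (g.f σ₂) u₂ ≤ ax.C1 := by
      rw [ax.proj_dist_eq hu₂, ← hφeq σ₂ hσ₂Icc]; exact hσ₂T.2
    have hdistσ : dist (g.f σ₁) (g.f σ₂) ≤ 3 * ax.C1 := by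
      calc dist (g.f σ₁) (g.f σ₂) ≤ dist (g.f σ₁) u₁ + dist u₁ u₂ + dist u₂ (g.f σ₂) :=
            dist_triangle4 _ _ _ _
        _ ≤ ax.C1 + ax.C1 + ax.C1 := by
            refine add_le_add (add_le_add hgu₁ hd12) ?_
            rw [dist_comm]; exact hgu₂
        _ = 3 * ax.C1 := by ring
    have hlen : σ₂ - σ₁ ≤ 3 * ax.C1 := by
      have heq : dist (g.f σ₁) (g.f σ₂) = σ₂ - σ₁ := by
        rw [g.dist_eq hσ₁Icc hσ₂Icc, abs_of_nonpos (by linarith)]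
        ring
      linarith [heq ▸ hdistσ]
    have h1 : Metric.infDist (g.f t) ax.A ≤ Metric.infDist (g.f σ₁) ax.A +
        dist (g.f t) (g.f σ₁) := Metric.infDist_le_infDist_add_dist
    have hdt : dist (g.f t) (g.f σ₁) = t - σ₁ := by
      rw [g.dist_eq htIcc hσ₁Icc, abs_of_nonneg (by linarith)]
    have h2 : Metric.infDist (g.f σ₁) ax.A ≤ ax.C1 := by
      rw [← hφeq σ₁ hσ₁Icc]; exact hσ₁T.2
    rw [hφeq t htIcc]
    rw [hdt] at h1
    linarith
  exact ⟨t₁, t₂, ht₁T.1, ht₂T.1, ht₁₂, by rw [← hφeq t₁ ht₁T.1]; exact ht₁T.2,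
    by rw [← hφeq t₂ ht₂T.1]; exact ht₂T.2, entry, exit, tube⟩

/-! Constants for the contraction estimates. -/

/-- jump constant -/
def J1 : ℝ := ax.c * (8 * ax.C1 + 1 + ax.c)
/-- endpoint matching constant -/
def J2 : ℝ := ax.c * (6 * ax.C1 + ax.c)
/-- safety margin -/
def Sb : ℝ := ax.J1 + ax.J2 + 1
/-- middle-passage radius -/
def r1 : ℝ := 4 * ax.C1 + ax.c * ax.J1 + ax.c
/-- index threshold -/
def s0 : ℝ := ax.Sb + ax.c * (ax.C1 + ax.c)
/-- reverse-triangle defect -/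
def r2 : ℝ := ax.r1 + ax.c * (ax.Sb + 1) + ax.c
/-- the cone radius -/
def rstar : ℝ := ax.r1 + 2 * ax.C1 + ax.c * ax.s0 + ax.c
/-- the Busemann defect constant -/
def kappa : ℝ := 3 * ax.s0 / ax.c + 3 * ax.c * ax.s0 + 2 * ax.c + 2 * ax.r2 + 4 * ax.C1

lemma J1_nonneg : 0 ≤ ax.J1 := by
  have h1 := ax.hc; have h2 := ax.hC; unfold J1; nlinarith
lemma J2_nonneg : 0 ≤ ax.J2 := by
  have h1 := ax.hc; have h2 := ax.hC; unfold J2; nlinarith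
lemma Sb_pos : 0 < ax.Sb := by
  have := ax.J1_nonneg; have := ax.J2_nonneg; unfold Sb; linarith
lemma r1_nonneg : 0 ≤ ax.r1 := by
  have h1 := ax.hc; have h2 := ax.hC; have := ax.J1_nonneg; unfold r1; nlinarith
lemma s0_lb : ax.Sb + ax.c * (ax.C1 + ax.c) ≤ ax.s0 := le_of_eq rfl
lemma s0_pos : 0 < ax.s0 := by
  have h1 := ax.hc; have h2 := ax.hC; have := ax.Sb_pos; unfold s0; nlinarith
lemma r2_nonneg : 0 ≤ ax.r2 := by
  have h1 := ax.hc; have := ax.r1_nonneg; have := ax.Sb_pos; unfold r2; nlinarith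
lemma r1_le_r2 : ax.r1 ≤ ax.r2 := by
  have h1 := ax.hc; have := ax.Sb_pos; unfold r2; nlinarith
lemma rstar_nonneg : 0 ≤ ax.rstar := by
  have h1 := ax.hc; have h2 := ax.hC; have := ax.r1_nonneg; have := ax.s0_pos
  unfold rstar; nlinarith

open ShadowGeo in
/-- If the geodesic never enters the `C₁`-neighbourhood of the axis, the projections
of the endpoints are `C₁`-close. -/
lemma no_entry [ProperSpace Y] {x z : Y} (g : Geod Y x z)
    (hT : ¬ ∃ t ∈ Set.Icc (0:ℝ) (dist x z), Metric.infDist (g.f t) ax.A ≤ ax.C1) :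
    ∀ u ∈ projSet ax.A x, ∀ v ∈ projSet ax.A z, dist u v ≤ ax.C1 := by
  push_neg at hT
  intro u hu v hv
  have hfar : ∀ p ∈ g.set, ax.C1 ≤ Metric.infDist p ax.A := by
    rintro - ⟨s, hs, rfl⟩
    exact le_of_lt (hT s hs)
  exact ax.contr' g.isGeodesicIn hfar u (ax.mem_projSetOf g.mem_left hu) v
    (ax.mem_projSetOf g.mem_right hv)

open ShadowGeo in
/-- Middle passage: a geodesic whose entry and exit indices bracket `m` (with margin)
passes `r₁`-close to `pt m`. -/
lemma middle [ProperSpace Y] {x z : Y} (g : Geod Y x z) {t₁ t₂ : ℝ}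
    (ht₁ : t₁ ∈ Set.Icc (0:ℝ) (dist x z)) (ht₂ : t₂ ∈ Set.Icc (0:ℝ) (dist x z))
    (h12 : t₁ ≤ t₂)
    (htube : ∀ t ∈ Set.Icc t₁ t₂, Metric.infDist (g.f t) ax.A ≤ 4 * ax.C1)
    {i j m : ℤ} (hi : dist (g.f t₁) (ax.pt i) ≤ 2 * ax.C1)
    (hj : dist (g.f t₂) (ax.pt j) ≤ 2 * ax.C1)
    (hm1 : (i:ℝ) + ax.Sb ≤ (m:ℝ)) (hm2 : (m:ℝ) ≤ (j:ℝ) - ax.Sb) :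
    ∃ t ∈ Set.Icc t₁ t₂, dist (g.f t) (ax.pt m) ≤ ax.r1 := by
  have hc := ax.c_pos
  have hC1 := ax.C1_pos
  have hJ1 := ax.J1_nonneg
  have hJ2 := ax.J2_nonneg
  -- the grid
  set τ : ℕ → ℝ := fun k => min (t₁ + k) t₂ with hτdef
  have hτmem : ∀ k, τ k ∈ Set.Icc t₁ t₂ := by
    intro k
    constructor
    · apply le_min _ h12
      have : (0:ℝ) ≤ (k:ℕ) := Nat.cast_nonneg k
      linarith
    · exact min_le_right _ _
  have hτIcc : ∀ k, τ k ∈ Set.Icc (0:ℝ) (dist x z) :=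
    fun k => ⟨le_trans ht₁.1 (hτmem k).1, le_trans (hτmem k).2 ht₂.2⟩
  have hτstep : ∀ k, τ k ≤ τ (k+1) ∧ τ (k+1) ≤ τ k + 1 := by
    intro k
    constructor
    · apply le_min _ (min_le_right _ _)
      calc min (t₁ + k) t₂ ≤ t₁ + k := min_le_left _ _
        _ ≤ t₁ + (k+1:ℕ) := by push_cast; linarith
    · rcases le_total (t₁ + k) t₂ with h | h
      · have h1 : τ k = t₁ + k := min_eq_left h
        rw [h1]
        calc τ (k+1) ≤ t₁ + ((k+1:ℕ):ℝ) := min_le_left _ _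
          _ = t₁ + k + 1 := by push_cast; ring
      · have h1 : τ k = t₂ := min_eq_right h
        rw [h1]
        have : τ (k+1) ≤ t₂ := min_le_right _ _
        linarith
  -- choose nearby indices
  have hsel : ∀ k : ℕ, ∃ n : ℤ, dist (g.f (τ k)) (ax.pt n) ≤ 4 * ax.C1 := by
    intro k
    obtain ⟨w, hwA, hwd⟩ := ax.A_closed.exists_infDist_eq_dist ax.A_nonempty (g.f (τ k))
    obtain ⟨n, hn⟩ := hwA
    exact ⟨n, by rw [hn, ← hwd]; exact htube _ (hτmem k)⟩
  choose nf hnf using hsel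
  -- jump bound
  have hjump : ∀ k, |(nf (k+1) : ℝ) - (nf k : ℝ)| ≤ ax.J1 := by
    intro k
    have hd : dist (ax.pt (nf (k+1))) (ax.pt (nf k)) ≤ 8 * ax.C1 + 1 := by
      have h1 : dist (g.f (τ (k+1))) (g.f (τ k)) ≤ 1 := by
        rw [g.dist_eq (hτIcc (k+1)) (hτIcc k)]
        rw [abs_of_nonneg (by linarith [(hτstep k).1])]
        linarith [(hτstep k).2]
      calc dist (ax.pt (nf (k+1))) (ax.pt (nf k)) ≤
            dist (ax.pt (nf (k+1))) (g.f (τ (k+1))) + dist (g.f (τ (k+1))) (g.f (τ k)) +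
              dist (g.f (τ k)) (ax.pt (nf k)) := dist_triangle4 _ _ _ _
        _ ≤ 4 * ax.C1 + 1 + 4 * ax.C1 := by
            refine add_le_add (add_le_add ?_ h1) (hnf k)
            rw [dist_comm]; exact hnf (k+1)
        _ = 8 * ax.C1 + 1 := by ring
    have := ax.index_bound hd
    calc |(nf (k+1) : ℝ) - (nf k : ℝ)| ≤ ax.c * (8 * ax.C1 + 1 + ax.c) := this
      _ = ax.J1 := rfl
  -- endpoint index bounds
  have hτ0 : τ 0 = t₁ := by
    simp only [hτdef, Nat.cast_zero, add_zero]
    exact min_eq_left h12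
  set N : ℕ := ⌈t₂ - t₁⌉₊ with hNdef
  have hτN : τ N = t₂ := by
    apply min_eq_right
    have := Nat.le_ceil (t₂ - t₁)
    linarith
  have hn0 : |(nf 0 : ℝ) - (i:ℝ)| ≤ ax.J2 := by
    have hd : dist (ax.pt (nf 0)) (ax.pt i) ≤ 6 * ax.C1 := by
      calc dist (ax.pt (nf 0)) (ax.pt i) ≤
            dist (ax.pt (nf 0)) (g.f (τ 0)) + dist (g.f (τ 0)) (ax.pt i) := dist_triangle _ _ _
        _ ≤ 4 * ax.C1 + 2 * ax.C1 := by
            refine add_le_add ?_ (by rw [hτ0]; exact hi)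
            rw [dist_comm]; exact hnf 0
        _ = 6 * ax.C1 := by ring
    have := ax.index_bound hd
    calc |(nf 0 : ℝ) - (i:ℝ)| ≤ ax.c * (6 * ax.C1 + ax.c) := this
      _ = ax.J2 := rfl
  have hnN : |(nf N : ℝ) - (j:ℝ)| ≤ ax.J2 := by
    have hd : dist (ax.pt (nf N)) (ax.pt j) ≤ 6 * ax.C1 := by
      calc dist (ax.pt (nf N)) (ax.pt j) ≤
            dist (ax.pt (nf N)) (g.f (τ N)) + dist (g.f (τ N)) (ax.pt j) := dist_triangle _ _ _
        _ ≤ 4 * ax.C1 + 2 * ax.C1 := by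
            refine add_le_add ?_ (by rw [hτN]; exact hj)
            rw [dist_comm]; exact hnf N
        _ = 6 * ax.C1 := by ring
    have := ax.index_bound hd
    calc |(nf N : ℝ) - (j:ℝ)| ≤ ax.c * (6 * ax.C1 + ax.c) := this
      _ = ax.J2 := rfl
  -- first crossing
  have hSb : ax.Sb = ax.J1 + ax.J2 + 1 := rfl
  have hPN : m ≤ nf N := by
    have h1 : (m:ℝ) ≤ (nf N : ℝ) := by
      have := abs_le.mp hnN
      linarith [this.1]
    exact_mod_cast h1
  have hex : ∃ k, m ≤ nf k := ⟨N, hPN⟩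
  set k₀ := Nat.find hex with hk₀def
  have hk₀spec : m ≤ nf k₀ := Nat.find_spec hex
  have hn0lt : ¬ (m ≤ nf 0) := by
    intro hcon
    have h1 : (m:ℝ) ≤ (nf 0 : ℝ) := by exact_mod_cast hcon
    have := abs_le.mp hn0
    linarith [this.2]
  have hk₀pos : k₀ ≠ 0 := by
    intro h; rw [h] at hk₀spec; exact hn0lt hk₀spec
  have hk'ex : k₀ - 1 + 1 = k₀ := Nat.succ_pred_eq_of_pos (Nat.pos_of_ne_zero hk₀pos)
  have hk'lt : ¬ (m ≤ nf (k₀ - 1)) := Nat.find_min hex (by omega)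
  have hclose : |(nf k₀ : ℝ) - (m:ℝ)| ≤ ax.J1 := by
    have h1 : (m:ℝ) ≤ (nf k₀ : ℝ) := by exact_mod_cast hk₀spec
    have h2 : (nf (k₀ - 1) : ℝ) < (m:ℝ) := by
      have : nf (k₀ - 1) < m := by omega
      exact_mod_cast this
    have h3 : |(nf (k₀ - 1 + 1) : ℝ) - (nf (k₀ - 1) : ℝ)| ≤ ax.J1 := hjump (k₀ - 1)
    rw [hk'ex] at h3
    have := abs_le.mp h3
    rw [abs_le]
    constructor <;> linarith [this.1, this.2]
  refine ⟨τ k₀, hτmem k₀, ?_⟩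
  have hdm : dist (ax.pt (nf k₀)) (ax.pt m) ≤ ax.c * ax.J1 + ax.c := by
    have := ax.upper (nf k₀) m
    have h2 : ax.c * |(nf k₀ : ℝ) - (m:ℝ)| ≤ ax.c * ax.J1 :=
      mul_le_mul_of_nonneg_left hclose (le_of_lt hc)
    linarith
  calc dist (g.f (τ k₀)) (ax.pt m) ≤
        dist (g.f (τ k₀)) (ax.pt (nf k₀)) + dist (ax.pt (nf k₀)) (ax.pt m) := dist_triangle _ _ _
    _ ≤ 4 * ax.C1 + (ax.c * ax.J1 + ax.c) := add_le_add (hnf k₀) hdm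
    _ = ax.r1 := by rw [r1]; ring

open ShadowGeo in
/-- Gate property: the projection is a coarse gate for distances to axis points. -/
lemma gate [ProperSpace Y] (hY : GeodesicSpace Y) (z : Y) (k : ℤ) {w : Y}
    (hw : w ∈ projSet ax.A z) :
    dist z w + dist w (ax.pt k) - 4 * ax.C1 ≤ dist z (ax.pt k) := by
  have hC1 := ax.C1_pos
  obtain ⟨g⟩ := exists_geod hY z (ax.pt k)
  by_cases hT : ∃ t ∈ Set.Icc (0:ℝ) (dist z (ax.pt k)), Metric.infDist (g.f t) ax.A ≤ ax.C1
  · obtain ⟨t₁, t₂, ht₁, ht₂, h12, hc₁, hc₂, hent, hexit, htube⟩ := ax.coreGeo g hT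
    have h1 : dist (g.f t₁) w ≤ 2 * ax.C1 := hent w hw
    have h2 : dist z (g.f t₁) = t₁ := g.dist_left ht₁
    have h3 : dist (g.f t₁) (ax.pt k) = dist z (ax.pt k) - t₁ := g.dist_right ht₁
    have h4 : dist z w ≤ t₁ + 2 * ax.C1 := by
      calc dist z w ≤ dist z (g.f t₁) + dist (g.f t₁) w := dist_triangle _ _ _
        _ ≤ t₁ + 2 * ax.C1 := by rw [h2]; linarith
    have h5 : dist w (ax.pt k) ≤ 2 * ax.C1 + (dist z (ax.pt k) - t₁) := by
      calc dist w (ax.pt k) ≤ dist w (g.f t₁) + dist (g.f t₁) (ax.pt k) := dist_triangle _ _ _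
        _ ≤ 2 * ax.C1 + (dist z (ax.pt k) - t₁) := by
            rw [h3, dist_comm w]; linarith
    linarith
  · have hwk : dist w (ax.pt k) ≤ ax.C1 := ax.no_entry g hT w hw (ax.pt k) (ax.self_proj k)
    have htri : dist z w ≤ dist z (ax.pt k) + dist (ax.pt k) w := dist_triangle _ _ _
    have hcomm : dist (ax.pt k) w = dist w (ax.pt k) := dist_comm _ _
    linarith

open ShadowGeo in
/-- Reverse triangle inequality through the basepoint along the axis. -/
lemma revTriangle [ProperSpace Y] (hY : GeodesicSpace Y) {m n : ℤ}
    (hm : (m:ℝ) ≤ 0) (hn : (0:ℝ) ≤ (n:ℝ)) :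
    dist (ax.pt m) (ax.pt 0) + dist (ax.pt 0) (ax.pt n) - 2 * ax.r2 ≤
      dist (ax.pt m) (ax.pt n) := by
  have hc := ax.c_pos
  by_cases hbig : (m:ℝ) ≤ -ax.Sb ∧ ax.Sb ≤ (n:ℝ)
  · obtain ⟨g⟩ := exists_geod hY (ax.pt m) (ax.pt n)
    have hT : ∃ t ∈ Set.Icc (0:ℝ) (dist (ax.pt m) (ax.pt n)),
        Metric.infDist (g.f t) ax.A ≤ ax.C1 := by
      refine ⟨0, ⟨le_refl _, dist_nonneg⟩, ?_⟩
      rw [g.h0, Metric.infDist_zero_of_mem (ax.pt_mem m)]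
      exact le_of_lt ax.C1_pos
    obtain ⟨t₁, t₂, ht₁, ht₂, h12, hc₁, hc₂, hent, hexit, htube⟩ := ax.coreGeo g hT
    have hi : dist (g.f t₁) (ax.pt m) ≤ 2 * ax.C1 := hent (ax.pt m) (ax.self_proj m)
    have hj : dist (g.f t₂) (ax.pt n) ≤ 2 * ax.C1 := hexit (ax.pt n) (ax.self_proj n)
    obtain ⟨t, htm, htd⟩ := ax.middle g ht₁ ht₂ h12 htube hi hj
      (m := 0) (by push_cast; linarith [hbig.1]) (by push_cast; linarith [hbig.2])
    have htIcc : t ∈ Set.Icc (0:ℝ) (dist (ax.pt m) (ax.pt n)) :=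
      ⟨le_trans ht₁.1 htm.1, le_trans htm.2 ht₂.2⟩
    have hdl : dist (ax.pt m) (g.f t) = t := g.dist_left htIcc
    have hdr : dist (g.f t) (ax.pt n) = dist (ax.pt m) (ax.pt n) - t := g.dist_right htIcc
    have h1 : dist (ax.pt m) (ax.pt 0) ≤ t + ax.r1 := by
      calc dist (ax.pt m) (ax.pt 0) ≤ dist (ax.pt m) (g.f t) + dist (g.f t) (ax.pt 0) :=
            dist_triangle _ _ _
        _ ≤ t + ax.r1 := by rw [hdl]; linarith
    have h2 : dist (ax.pt 0) (ax.pt n) ≤ ax.r1 + (dist (ax.pt m) (ax.pt n) - t) := by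
      calc dist (ax.pt 0) (ax.pt n) ≤ dist (ax.pt 0) (g.f t) + dist (g.f t) (ax.pt n) :=
            dist_triangle _ _ _
        _ ≤ ax.r1 + (dist (ax.pt m) (ax.pt n) - t) := by
            rw [hdr, dist_comm (ax.pt 0)]; linarith
    have hr12 := ax.r1_le_r2
    linarith
  · have hsmall : (-ax.Sb < (m:ℝ)) ∨ ((n:ℝ) < ax.Sb) := by
      by_contra hcon
      push_neg at hcon
      exact hbig ⟨le_of_lt (lt_of_not_ge (fun h => hbig ⟨by linarith [hcon.1], hcon.2⟩)), hcon.2⟩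
    rcases hsmall with h | h
    · have habs : |(m:ℝ) - ((0:ℤ):ℝ)| ≤ ax.Sb := by
        rw [Int.cast_zero, sub_zero, abs_le]
        constructor <;> linarith [ax.Sb_pos]
      have hup : dist (ax.pt m) (ax.pt 0) ≤ ax.c * ax.Sb + ax.c := by
        have := ax.upper m 0
        have h2 : ax.c * |(m:ℝ) - ((0:ℤ):ℝ)| ≤ ax.c * ax.Sb :=
          mul_le_mul_of_nonneg_left habs (le_of_lt hc)
        linarith
      have hle : dist (ax.pt m) (ax.pt 0) ≤ ax.r2 := by
        have := ax.r1_nonneg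
        rw [r2]; unfold r2 at *; nlinarith [ax.Sb_pos]
      have htri : dist (ax.pt 0) (ax.pt n) ≤ dist (ax.pt 0) (ax.pt m) + dist (ax.pt m) (ax.pt n) :=
        dist_triangle _ _ _
      have hcomm : dist (ax.pt 0) (ax.pt m) = dist (ax.pt m) (ax.pt 0) := dist_comm _ _
      linarith
    · have habs : |(n:ℝ) - ((0:ℤ):ℝ)| ≤ ax.Sb := by
        rw [Int.cast_zero, sub_zero, abs_le]
        constructor <;> linarith [ax.Sb_pos]
      have hup : dist (ax.pt n) (ax.pt 0) ≤ ax.c * ax.Sb + ax.c := by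
        have := ax.upper n 0
        have h2 : ax.c * |(n:ℝ) - ((0:ℤ):ℝ)| ≤ ax.c * ax.Sb :=
          mul_le_mul_of_nonneg_left habs (le_of_lt hc)
        linarith
      have hle : dist (ax.pt n) (ax.pt 0) ≤ ax.r2 := by
        have := ax.r1_nonneg
        rw [r2]; unfold r2 at *; nlinarith [ax.Sb_pos]
      have htri : dist (ax.pt m) (ax.pt 0) ≤ dist (ax.pt m) (ax.pt n) + dist (ax.pt n) (ax.pt 0) :=
        dist_triangle _ _ _
      have hcomm : dist (ax.pt 0) (ax.pt n) = dist (ax.pt n) (ax.pt 0) := dist_comm _ _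
      linarith

/-- The reversed axis. -/
def flip : Axis Y where
  pt := fun n => ax.pt (-n)
  c := ax.c
  C1 := ax.C1
  hc := ax.hc
  hC := ax.hC
  lower := by
    intro m n
    have h := ax.lower (-m) (-n)
    have he : |((-m : ℤ):ℝ) - ((-n : ℤ):ℝ)| = |(m:ℝ) - (n:ℝ)| := by
      push_cast
      rw [← abs_neg]
      ring_nf
    rw [he] at h
    exact h
  upper := by
    intro m n
    have h := ax.upper (-m) (-n)
    have he : |((-m : ℤ):ℝ) - ((-n : ℤ):ℝ)| = |(m:ℝ) - (n:ℝ)| := by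
      push_cast
      rw [← abs_neg]
      ring_nf
    rw [he] at h
    exact h
  contr := by
    have hr : Set.range (fun n : ℤ => ax.pt (-n)) = Set.range ax.pt := by
      ext y
      constructor
      · rintro ⟨n, rfl⟩; exact ⟨-n, rfl⟩
      · rintro ⟨n, rfl⟩; exact ⟨-n, by simp⟩
    show IsContractingSet ax.C1 (Set.range (fun n : ℤ => ax.pt (-n)))
    rw [hr]
    exact ax.contr

lemma flip_A : ax.flip.A = ax.A := by
  show Set.range (fun n : ℤ => ax.pt (-n)) = Set.range ax.pt
  ext y
  constructor
  · rintro ⟨n, rfl⟩; exact ⟨-n, rfl⟩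
  · rintro ⟨n, rfl⟩; exact ⟨-n, by simp⟩

lemma flip_pt (n : ℤ) : ax.flip.pt n = ax.pt (-n) := rfl

lemma flip_s0 : ax.flip.s0 = ax.s0 := rfl
lemma flip_rstar : ax.flip.rstar = ax.rstar := rfl
lemma flip_kappa : ax.flip.kappa = ax.kappa := rfl

open ShadowGeo in
/-- Cone lemma: a geodesic from a point projecting below `s₀` to a point projecting
above `3 s₀` passes `rstar`-close to the basepoint `pt 0`. -/
lemma cone [ProperSpace Y] {x z : Y} {aI b : ℤ}
    (hwx : ax.pt aI ∈ projSet ax.A x) (haa : (aI:ℝ) ≤ ax.s0)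
    (hwz : ax.pt b ∈ projSet ax.A z) (hbb : 3 * ax.s0 ≤ (b:ℝ))
    (g : Geod Y x z) :
    ∃ t ∈ Set.Icc (0:ℝ) (dist x z), dist (g.f t) (ax.pt 0) ≤ ax.rstar := by
  have hc := ax.c_pos
  have hC1 := ax.C1_pos
  have hs0 := ax.s0_pos
  have hSb := ax.Sb_pos
  by_cases hT : ∃ t ∈ Set.Icc (0:ℝ) (dist x z), Metric.infDist (g.f t) ax.A ≤ ax.C1
  · obtain ⟨t₁, t₂, ht₁, ht₂, h12, hc₁, hc₂, hent, hexit, htube⟩ := ax.coreGeo g hT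
    have hi : dist (g.f t₁) (ax.pt aI) ≤ 2 * ax.C1 := hent (ax.pt aI) hwx
    have hj : dist (g.f t₂) (ax.pt b) ≤ 2 * ax.C1 := hexit (ax.pt b) hwz
    by_cases hcase : -ax.s0 ≤ (aI:ℝ)
    · refine ⟨t₁, ht₁, ?_⟩
      have habs : |(aI:ℝ) - ((0:ℤ):ℝ)| ≤ ax.s0 := by
        rw [Int.cast_zero, sub_zero, abs_le]
        exact ⟨by linarith, haa⟩
      have hup : dist (ax.pt aI) (ax.pt 0) ≤ ax.c * ax.s0 + ax.c := by
        have := ax.upper aI 0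
        have h2 : ax.c * |(aI:ℝ) - ((0:ℤ):ℝ)| ≤ ax.c * ax.s0 :=
          mul_le_mul_of_nonneg_left habs (le_of_lt hc)
        linarith
      calc dist (g.f t₁) (ax.pt 0) ≤ dist (g.f t₁) (ax.pt aI) + dist (ax.pt aI) (ax.pt 0) :=
            dist_triangle _ _ _
        _ ≤ 2 * ax.C1 + (ax.c * ax.s0 + ax.c) := add_le_add hi hup
        _ ≤ ax.rstar := by
            have h : ax.rstar = ax.r1 + 2 * ax.C1 + ax.c * ax.s0 + ax.c := rfl
            rw [h]; linarith [ax.r1_nonneg]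
    · push_neg at hcase
      have hSble : ax.Sb ≤ ax.s0 := by
        rw [s0]; unfold s0 at *; nlinarith [ax.hc, ax.hC]
      obtain ⟨t, htm, htd⟩ := ax.middle g ht₁ ht₂ h12 htube hi hj
        (m := 0) (by push_cast; linarith) (by push_cast; linarith)
      refine ⟨t, ⟨le_trans ht₁.1 htm.1, le_trans htm.2 ht₂.2⟩, ?_⟩
      calc dist (g.f t) (ax.pt 0) ≤ ax.r1 := htd
        _ ≤ ax.rstar := by
            have h : ax.rstar = ax.r1 + 2 * ax.C1 + ax.c * ax.s0 + ax.c := rfl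
            rw [h]; nlinarith [ax.hc, ax.hC, ax.s0_pos]
  · exfalso
    have hd := ax.no_entry g hT (ax.pt aI) hwx (ax.pt b) hwz
    have := ax.index_bound hd
    have habs : (b:ℝ) - (aI:ℝ) ≤ |(aI:ℝ) - (b:ℝ)| := by
      rw [abs_sub_comm]
      exact le_abs_self _
    have hs0c : ax.Sb + ax.c * (ax.C1 + ax.c) ≤ ax.s0 := ax.s0_lb
    nlinarith

open ShadowGeo in
/-- Value bound: if no projection of `z` has index `≤ -3s₀` then the Busemann function
of `z` grows linearly along the negative axis. -/
lemma valueBound [ProperSpace Y] (hY : GeodesicSpace Y) {z : Y}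
    (hz : ¬ ∃ b : ℤ, (b:ℝ) ≤ -(3 * ax.s0) ∧ ax.pt b ∈ projSet ax.A z) (m : ℕ) :
    (m:ℝ)/ax.c - ax.kappa ≤ dist (ax.pt (-(m:ℤ))) z - dist (ax.pt 0) z := by
  push_neg at hz
  have hc := ax.c_pos
  have hC1 := ax.C1_pos
  have hs0 := ax.s0_pos
  have hr2 := ax.r2_nonneg
  obtain ⟨w, hw⟩ := ax.proj_nonempty z
  obtain ⟨nI, hnI⟩ := (ax.proj_mem_A hw : w ∈ Set.range ax.pt)
  have hnbig : -(3 * ax.s0) < (nI:ℝ) := by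
    by_contra hcon
    push_neg at hcon
    exact absurd (hnI ▸ hw) (by
      intro hmem
      exact absurd hcon (not_le.mpr (lt_of_not_ge (fun hle => (hz nI hle) (hnI ▸ hw)))))
  have hgate := ax.gate hY z (-(m:ℤ)) hw
  have h0 : dist (ax.pt 0) z ≤ dist z w + dist w (ax.pt 0) := by
    rw [dist_comm (ax.pt 0) z]
    exact dist_triangle _ _ _
  have hcommz : dist (ax.pt (-(m:ℤ))) z = dist z (ax.pt (-(m:ℤ))) := dist_comm _ _
  -- it suffices to bound dist w (pt (-m)) - dist w (pt 0)
  have hkey : (m:ℝ)/ax.c - (ax.kappa - 4 * ax.C1) ≤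
      dist w (ax.pt (-(m:ℤ))) - dist w (ax.pt 0) := by
    rcases le_or_gt (nI:ℝ) 0 with hcase | hcase
    · -- -3s₀ < nI ≤ 0
      have hlow : ((m:ℝ) - 3 * ax.s0)/ax.c - ax.c ≤ dist w (ax.pt (-(m:ℤ))) := by
        have h := ax.lower nI (-(m:ℤ))
        rw [← hnI]
        have habs : (m:ℝ) - 3 * ax.s0 ≤ |(nI:ℝ) - ((-(m:ℤ) : ℤ):ℝ)| := by
          have h1 : (nI:ℝ) - ((-(m:ℤ) : ℤ):ℝ) = (nI:ℝ) + (m:ℝ) := by push_cast; ring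
          rw [h1]
          calc (m:ℝ) - 3 * ax.s0 ≤ (nI:ℝ) + (m:ℝ) := by linarith
            _ ≤ |(nI:ℝ) + (m:ℝ)| := le_abs_self _
        have h2 : (1/ax.c) * ((m:ℝ) - 3 * ax.s0) ≤ (1/ax.c) * |(nI:ℝ) - ((-(m:ℤ) : ℤ):ℝ)| := by
          apply mul_le_mul_of_nonneg_left habs
          positivity
        have h3 : ((m:ℝ) - 3 * ax.s0)/ax.c = (1/ax.c) * ((m:ℝ) - 3 * ax.s0) := by ring
        rw [h3]
        linarith
      have hup : dist w (ax.pt 0) ≤ 3 * ax.c * ax.s0 + ax.c := by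
        rw [← hnI]
        have h := ax.upper nI 0
        have habs : |(nI:ℝ) - ((0:ℤ):ℝ)| ≤ 3 * ax.s0 := by
          rw [Int.cast_zero, sub_zero, abs_le]
          exact ⟨by linarith, by linarith⟩
        have h2 : ax.c * |(nI:ℝ) - ((0:ℤ):ℝ)| ≤ ax.c * (3 * ax.s0) :=
          mul_le_mul_of_nonneg_left habs (le_of_lt hc)
        calc dist (ax.pt nI) (ax.pt 0) ≤ ax.c * |(nI:ℝ) - ((0:ℤ):ℝ)| + ax.c := h
          _ ≤ 3 * ax.c * ax.s0 + ax.c := by linarith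
      have hkap : ax.kappa = 3 * ax.s0 / ax.c + 3 * ax.c * ax.s0 + 2 * ax.c + 2 * ax.r2 +
          4 * ax.C1 := rfl
      have hdiv : ((m:ℝ) - 3 * ax.s0)/ax.c = (m:ℝ)/ax.c - 3 * ax.s0/ax.c := by ring
      rw [hdiv] at hlow
      linarith
    · -- nI > 0 : use the reverse triangle inequality
      have hrev := ax.revTriangle hY (m := -(m:ℤ)) (n := nI)
        (by push_cast; linarith [Nat.cast_nonneg (α := ℝ) m]) (by push_cast; linarith)
      have hw1 : dist w (ax.pt (-(m:ℤ))) = dist (ax.pt (-(m:ℤ))) (ax.pt nI) := by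
        rw [← hnI, dist_comm]
      have hw2 : dist w (ax.pt 0) = dist (ax.pt 0) (ax.pt nI) := by
        rw [← hnI, dist_comm]
      have hlowm : (m:ℝ)/ax.c - ax.c ≤ dist (ax.pt (-(m:ℤ))) (ax.pt 0) := by
        have h := ax.lower (-(m:ℤ)) 0
        have habs : |((-(m:ℤ) : ℤ):ℝ) - ((0:ℤ):ℝ)| = (m:ℝ) := by
          push_cast
          rw [sub_zero, abs_neg, abs_of_nonneg (Nat.cast_nonneg m)]
        rw [habs] at h
        have h3 : (m:ℝ)/ax.c = (1/ax.c) * (m:ℝ) := by ring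
        rw [h3]
        linarith
      have hkap : ax.kappa = 3 * ax.s0 / ax.c + 3 * ax.c * ax.s0 + 2 * ax.c + 2 * ax.r2 +
          4 * ax.C1 := rfl
      have hpos : 0 ≤ 3 * ax.s0 / ax.c := by positivity
      have hpos2 : 0 ≤ 3 * ax.c * ax.s0 := by positivity
      rw [hw1, hw2]
      linarith
  linarith

end Axis

section HoroBasic

variable {Y : Type*} [MetricSpace Y]

lemma busemannCM_apply (o y z : Y) : busemannCM o y z = dist z y - dist o y := rfl

lemma busemann_lip (o y z z' : Y) : busemannCM o y z - busemannCM o y z' ≤ dist z z' := by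
  simp only [busemannCM_apply]
  have := dist_triangle z z' y
  linarith

/-- Elements of the horocompactification are normalized and 1-Lipschitz. -/
lemma horoCpt_props {o : Y} {ξ : C(Y, ℝ)} (hξ : ξ ∈ horoCpt Y o) :
    ξ o = 0 ∧ ∀ z z' : Y, ξ z - ξ z' ≤ dist z z' := by
  have h1 : IsClosed {η : C(Y,ℝ) | η o = 0} :=
    isClosed_eq (continuous_eval_const o) continuous_const
  have h2 : ∀ z z' : Y, IsClosed {η : C(Y,ℝ) | η z - η z' ≤ dist z z'} := fun z z' =>
    isClosed_le ((continuous_eval_const z).sub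
      (continuous_eval_const z')) continuous_const
  have hcl : IsClosed ({η : C(Y,ℝ) | η o = 0} ∩
      ⋂ z : Y, ⋂ z' : Y, {η : C(Y,ℝ) | η z - η z' ≤ dist z z'}) :=
    h1.inter (isClosed_iInter fun z => isClosed_iInter fun z' => h2 z z')
  have hsub : Set.range (busemannCM o) ⊆ {η : C(Y,ℝ) | η o = 0} ∩
      ⋂ z : Y, ⋂ z' : Y, {η : C(Y,ℝ) | η z - η z' ≤ dist z z'} := by
    rintro - ⟨y, rfl⟩
    refine ⟨by simp [busemannCM_apply], ?_⟩
    simp only [Set.mem_iInter, Set.mem_setOf_eq]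
    intro z z'
    exact busemann_lip o y z z'
  have hmem := (hcl.closure_eq ▸ closure_mono hsub) hξ
  refine ⟨hmem.1, ?_⟩
  have := hmem.2
  simp only [Set.mem_iInter, Set.mem_setOf_eq] at this
  exact this

/-- Every point of the horocompactification is a limit of a sequence of
Busemann functions. -/
lemma exists_seq_of_mem_horoCpt [ProperSpace Y] {o : Y} {ξ : C(Y,ℝ)}
    (hξ : ξ ∈ horoCpt Y o) : ∃ u : ℕ → Y, HoroConv o u ξ := by
  have hne : Nonempty Y := ⟨o⟩
  obtain ⟨D, hDc, hDd⟩ := TopologicalSpace.exists_countable_dense Y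
  have hDne : D.Nonempty := hDd.nonempty
  obtain ⟨e, hDe⟩ := hDc.exists_eq_range hDne
  have hξprops := horoCpt_props hξ
  -- select approximating points on finite sets
  have hsel : ∀ j : ℕ, ∃ y : Y, ∀ k, k ≤ j →
      |busemannCM o y (e k) - ξ (e k)| < 1/((j:ℝ)+1) := by
    intro j
    set O : Set C(Y,ℝ) :=
      ⋂ k ∈ Finset.range (j+1), (fun η : C(Y,ℝ) => η (e k)) ⁻¹'
        (Metric.ball (ξ (e k)) (1/((j:ℝ)+1))) with hOdef
    have hOopen : IsOpen O := isOpen_biInter_finset fun k _ =>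
      (continuous_eval_const (e k)).isOpen_preimage _ Metric.isOpen_ball
    have hξO : ξ ∈ O := by
      simp only [hOdef, Set.mem_iInter, Set.mem_preimage, Metric.mem_ball]
      intro k _
      rw [dist_self]
      positivity
    obtain ⟨η, hηO, hηR⟩ := _root_.mem_closure_iff.mp hξ O hOopen hξO
    obtain ⟨y, rfl⟩ := hηR
    refine ⟨y, fun k hk => ?_⟩
    simp only [hOdef, Set.mem_iInter, Set.mem_preimage, Metric.mem_ball] at hηO
    have := hηO k (Finset.mem_range.mpr (Nat.lt_succ_of_le hk))
    rwa [Real.dist_eq] at this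
  choose u hu using hsel
  refine ⟨u, ?_⟩
  -- pointwise convergence at points of D
  have hptwise : ∀ k : ℕ, Filter.Tendsto (fun j => busemannCM o (u j) (e k))
      Filter.atTop (𝓝 (ξ (e k))) := by
    intro k
    rw [Metric.tendsto_atTop]
    intro ε hε
    obtain ⟨N, hN⟩ := exists_nat_gt (1/ε)
    refine ⟨max k N, fun j hj => ?_⟩
    have hjk : k ≤ j := le_trans (le_max_left _ _) hj
    have hjN : (N:ℝ) ≤ (j:ℝ) := by exact_mod_cast le_trans (le_max_right _ _) hj
    have h1 := hu j k hjk
    have h2 : 1/((j:ℝ)+1) < ε := by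
      rw [div_lt_iff₀ (by positivity)]
      have h3 : 1/ε < (j:ℝ)+1 := by linarith
      rw [div_lt_iff₀ hε] at h3
      linarith
    rw [Real.dist_eq]
    linarith [abs_nonneg (busemannCM o (u j) (e k) - ξ (e k)), h1]
  -- upgrade to uniform convergence on compacts
  rw [HoroConv, ContinuousMap.tendsto_iff_forall_isCompact_tendstoUniformlyOn]
  intro K hK
  rw [Metric.tendstoUniformlyOn_iff]
  intro ε hε
  have hcover : K ⊆ ⋃ k : ℕ, Metric.ball (e k) (ε/4) := by
    intro y hy
    have : (Metric.ball y (ε/4) ∩ D).Nonempty := by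
      have := hDd.exists_mem_open Metric.isOpen_ball
        (⟨y, Metric.mem_ball_self (by positivity)⟩ : (Metric.ball y (ε/4)).Nonempty)
      obtain ⟨d, hd1, hd2⟩ := this
      exact ⟨d, hd2, hd1⟩
    obtain ⟨d, hd1, hd2⟩ := this
    rw [hDe] at hd2
    obtain ⟨k, rfl⟩ := hd2
    exact Set.mem_iUnion.mpr ⟨k, by rwa [Metric.mem_ball, dist_comm]⟩
  obtain ⟨t, ht⟩ := hK.elim_finite_subcover _ (fun k => Metric.isOpen_ball) hcover
  have hev : ∀ᶠ j in Filter.atTop, ∀ k ∈ t,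
      dist (busemannCM o (u j) (e k)) (ξ (e k)) < ε/4 := by
    rw [Filter.eventually_all_finset]
    intro k _
    exact Metric.tendsto_nhds.mp (hptwise k) (ε/4) (by positivity)
  filter_upwards [hev] with j hj
  intro y hyK
  obtain ⟨k, hkt, hyk⟩ := Set.mem_iUnion₂.mp (ht hyK)
  have hdyk : dist y (e k) < ε/4 := Metric.mem_ball.mp hyk
  have hLξ : |ξ y - ξ (e k)| ≤ dist y (e k) := by
    rw [abs_le]
    constructor
    · have := hξprops.2 (e k) y
      rw [dist_comm] at this
      linarith
    · exact hξprops.2 y (e k)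
  have hLb : |busemannCM o (u j) (e k) - busemannCM o (u j) y| ≤ dist y (e k) := by
    have hb1 := busemann_lip o (u j) (e k) y
    have hb2 := busemann_lip o (u j) y (e k)
    have hcm : dist (e k) y = dist y (e k) := dist_comm _ _
    rw [abs_le]
    constructor <;> linarith
  have h1 := hj k hkt
  rw [Real.dist_eq] at h1 ⊢
  have habs : |ξ y - busemannCM o (u j) y| ≤
      |ξ y - ξ (e k)| + |ξ (e k) - busemannCM o (u j) (e k)| +
        |busemannCM o (u j) (e k) - busemannCM o (u j) y| := by
    have := abs_sub_le (ξ y) (ξ (e k)) (busemannCM o (u j) y)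
    have h2 := abs_sub_le (ξ (e k)) (busemannCM o (u j) (e k)) (busemannCM o (u j) y)
    linarith
  have e3 : |ξ (e k) - busemannCM o (u j) (e k)| < ε/4 := by
    rw [abs_sub_comm]; exact h1
  linarith [lt_of_le_of_lt hLξ hdyk, lt_of_le_of_lt hLb hdyk]

end HoroBasic

section HoroGroup

variable {Y G : Type*} [MetricSpace Y] [Group G] [MulAction G Y] [ContinuousConstSMul G Y]

lemma smul_dist (hiso : IsometricAction G Y) (g : G) (a b : Y) :
    dist (g • a) (g • b) = dist a b := (hiso g).dist_eq a b

lemma horoAct_apply (o : Y) (g : G) (ξ : C(Y,ℝ)) (z : Y) :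
    horoAct o g ξ z = ξ (g⁻¹ • z) - ξ (g⁻¹ • o) := rfl

lemma horoAct_busemann (hiso : IsometricAction G Y) (o : Y) (g : G) (y : Y) :
    horoAct o g (busemannCM o y) = busemannCM o (g • y) := by
  ext z
  rw [horoAct_apply]
  simp only [busemannCM_apply]
  have h1 : dist (g⁻¹ • z) y = dist z (g • y) := by
    rw [← smul_dist hiso g (g⁻¹ • z) y, smul_inv_smul]
  have h2 : dist (g⁻¹ • o) y = dist o (g • y) := by
    rw [← smul_dist hiso g (g⁻¹ • o) y, smul_inv_smul]
  rw [h1, h2]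
  ring

lemma horoAct_continuous (o : Y) (g : G) : Continuous (horoAct o g : C(Y,ℝ) → C(Y,ℝ)) := by
  have heq : (horoAct o g : C(Y,ℝ) → C(Y,ℝ)) = fun ξ =>
      ξ.comp ⟨fun y => g⁻¹ • y, continuous_const_smul g⁻¹⟩ -
        ContinuousMap.const Y (ξ (g⁻¹ • o)) := by
    funext ξ
    ext z
    simp [horoAct_apply, ContinuousMap.comp_apply, ContinuousMap.sub_apply,
      ContinuousMap.const_apply]
  rw [heq]
  apply Continuous.sub
  · exact ContinuousMap.continuous_precomp _
  · exact ContinuousMap.continuous_const'.comp (continuous_eval_const (g⁻¹ • o))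

lemma horoAct_inv_self (o : Y) (g : G) {ξ : C(Y,ℝ)} (h0 : ξ o = 0) :
    horoAct o g⁻¹ (horoAct o g ξ) = ξ := by
  ext z
  rw [horoAct_apply, horoAct_apply, horoAct_apply]
  rw [inv_inv]
  rw [inv_smul_smul, inv_smul_smul]
  rw [h0]
  ring

lemma horoAct_mem_horoCpt (hiso : IsometricAction G Y) {o : Y} (g : G) {ξ : C(Y,ℝ)}
    (hξ : ξ ∈ horoCpt Y o) : horoAct o g ξ ∈ horoCpt Y o := by
  have himg : horoAct o g '' (Set.range (busemannCM o)) ⊆ Set.range (busemannCM o) := by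
    rintro - ⟨-, ⟨y, rfl⟩, rfl⟩
    exact ⟨g • y, (horoAct_busemann hiso o g y).symm⟩
  have h1 : horoAct o g ξ ∈ closure (horoAct o g '' (Set.range (busemannCM o))) := by
    apply image_closure_subset_closure_image (horoAct_continuous o g)
    exact ⟨ξ, hξ, rfl⟩
  exact closure_mono himg h1

lemma isHoroPoint_horoAct (hiso : IsometricAction G Y) {o : Y} (g : G) {ξ : C(Y,ℝ)}
    (hξ : IsHoroPoint o ξ) : IsHoroPoint o (horoAct o g ξ) := by
  refine ⟨horoAct_mem_horoCpt hiso g hξ.1, ?_⟩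
  intro y hy
  apply hξ.2 (g⁻¹ • y)
  have h0 : ξ o = 0 := (horoCpt_props hξ.1).1
  calc ξ = horoAct o g⁻¹ (horoAct o g ξ) := (horoAct_inv_self o g h0).symm
    _ = horoAct o g⁻¹ (busemannCM o y) := by rw [hy]
    _ = busemannCM o (g⁻¹ • y) := horoAct_busemann hiso o g⁻¹ y

lemma horoConv_smul (hiso : IsometricAction G Y) {o : Y} {u : ℕ → Y} {ξ : C(Y,ℝ)}
    (h : HoroConv o u ξ) (g : G) : HoroConv o (fun n => g • u n) (horoAct o g ξ) := by
  have heq : (fun n => busemannCM o (g • u n)) =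
      (horoAct o g) ∘ (fun n => busemannCM o (u n)) := by
    funext n
    exact (horoAct_busemann hiso o g (u n)).symm
  show Filter.Tendsto (fun n => busemannCM o (g • u n)) Filter.atTop (𝓝 (horoAct o g ξ))
  rw [heq]
  exact (((horoAct_continuous o g).tendsto ξ).comp h)

lemma horoConv_eval {o : Y} {u : ℕ → Y} {ξ : C(Y,ℝ)} (h : HoroConv o u ξ) (y : Y) :
    Filter.Tendsto (fun n => dist y (u n) - dist o (u n)) Filter.atTop (𝓝 (ξ y)) := by
  have := ((continuous_eval_const y).tendsto ξ).comp h
  have heq : ((fun f : C(Y,ℝ) => f y) ∘ fun n => busemannCM o (u n)) =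
      fun n => dist y (u n) - dist o (u n) := by
    funext n
    simp [busemannCM_apply]
  rwa [heq] at this

end HoroGroup

section MeasureAux

open MeasureTheory

variable {Y G : Type*} [MetricSpace Y] [Group G] [MulAction G Y] [ContinuousConstSMul G Y]
  [MeasurableSpace C(Y, ℝ)] [BorelSpace C(Y, ℝ)]

lemma smul_isGeodesicIn (hiso : IsometricAction G Y) {γ : Set Y} {x z : Y}
    (hγ : IsGeodesicIn Y γ x z) (g : G) : IsGeodesicIn Y (g • γ) (g • x) (g • z) := by
  obtain ⟨f, h0, hd, hisof, himg⟩ := hγ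
  have hdist : dist (g • x) (g • z) = dist x z := smul_dist hiso g x z
  refine ⟨fun t => g • f t, by show g • f 0 = g • x; rw [h0],
    by show g • f (dist (g • x) (g • z)) = g • z; rw [hdist, hd], ?_, ?_⟩
  · intro s hs t ht
    rw [hdist] at hs ht
    rw [smul_dist hiso]
    exact hisof s hs t ht
  · rw [hdist, himg, ← Set.image_smul, Set.image_image]

variable (o : Y) (ω : ℝ) (μ : Y → Measure C(Y, ℝ))

/-- Total mass of each orbit measure is 1. -/
lemma mass_one (hμ : IsConformalDensity G o ω μ) (g : G) : μ (g • o) Set.univ = 1 := by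
  rw [← hμ.2.2.2.1 g o]
  rw [Measure.map_apply (horoAct_continuous o g).measurable MeasurableSet.univ]
  simpa using hμ.2.2.1

/-- The conformal weight function is measurable. -/
lemma weight_measurable (x y : Y) :
    Measurable (fun ξ : C(Y,ℝ) => ENNReal.ofReal (Real.exp (-ω * (ξ x - ξ y)))) := by
  apply (ENNReal.continuous_ofReal.comp (Real.continuous_exp.comp
    (continuous_const.mul ((continuous_eval_const x).sub
      (continuous_eval_const y))))).measurable

/-- Lower conformal comparison between `μ o` and `μ (g • o)` on arbitrary sets. -/
lemma conf_lower (hμ : IsConformalDensity G o ω μ) (hω : 0 < ω) (g : G) (S : Set C(Y,ℝ)) :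
    ENNReal.ofReal (Real.exp (-ω * dist o (g • o))) * μ (g • o) S ≤ μ o S := by
  set D := dist o (g • o) with hD
  set H : Set C(Y,ℝ) := {ξ | ξ o - ξ (g • o) ≤ D} with hHdef
  have hHcl : IsClosed H := isClosed_le
    ((continuous_eval_const o).sub
      (continuous_eval_const (g • o))) continuous_const
  have hHmeas : MeasurableSet H := hHcl.measurableSet
  have hHhoro : ∀ ξ : C(Y,ℝ), IsHoroPoint o ξ → ξ ∈ H := by
    intro ξ hξ
    exact (horoCpt_props hξ.1).2 o (g • o)
  have hHc : μ (g • o) Hᶜ = 0 := by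
    apply measure_mono_null _ (hμ.2.1 (g • o))
    intro ξ hξ
    exact fun h => hξ (hHhoro ξ h)
  set A := toMeasurable (μ o) S with hA
  have hAmeas : MeasurableSet A := measurableSet_toMeasurable _ _
  have hAS : S ⊆ A := subset_toMeasurable _ _
  have h5 := hμ.2.2.2.2 o (g • o)
  have hstep1 : μ o S = μ o A := (measure_toMeasurable S).symm
  have hstep2 : μ o (A ∩ H) ≤ μ o A := measure_mono Set.inter_subset_left
  have hstep3 : ENNReal.ofReal (Real.exp (-ω * D)) * μ (g • o) (A ∩ H) ≤ μ o (A ∩ H) := by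
    rw [h5, MeasureTheory.withDensity_apply _ (hAmeas.inter hHmeas)]
    have hmono := MeasureTheory.setLIntegral_mono (μ := μ (g • o)) (s := A ∩ H)
      (f := fun _ => ENNReal.ofReal (Real.exp (-ω * D)))
      (g := fun ξ : C(Y,ℝ) => ENNReal.ofReal (Real.exp (-ω * (ξ o - ξ (g • o)))))
      (weight_measurable ω o (g • o)) ?_
    · rwa [MeasureTheory.setLIntegral_const] at hmono
    · intro ξ hξ
      apply ENNReal.ofReal_le_ofReal
      apply Real.exp_le_exp.mpr
      have hmem : ξ o - ξ (g • o) ≤ D := hξ.2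
      nlinarith
  have hstep4 : μ (g • o) S ≤ μ (g • o) (A ∩ H) := by
    have h1 : μ (g • o) S ≤ μ (g • o) (S ∩ H) + μ (g • o) (S \ H) :=
      measure_le_inter_add_diff _ _ _
    have h2 : μ (g • o) (S \ H) = 0 :=
      measure_mono_null (fun ξ hξ => hξ.2) hHc
    have h3 : μ (g • o) (S ∩ H) ≤ μ (g • o) (A ∩ H) :=
      measure_mono (Set.inter_subset_inter_left _ hAS)
    rw [h2, add_zero] at h1
    exact le_trans h1 h3
  calc ENNReal.ofReal (Real.exp (-ω * D)) * μ (g • o) S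
      ≤ ENNReal.ofReal (Real.exp (-ω * D)) * μ (g • o) (A ∩ H) := by
        exact mul_le_mul_right hstep4 _
    _ ≤ μ o (A ∩ H) := hstep3
    _ ≤ μ o A := hstep2
    _ = μ o S := hstep1.symm

/-- Upper conformal bound for sets with controlled Busemann cocycle. -/
lemma conf_upper (hμ : IsConformalDensity G o ω μ) (hω : 0 < ω) (g : G) {T : Set C(Y,ℝ)}
    (hT : MeasurableSet T) (β : ℝ) (hTsub : ∀ ξ ∈ T, β ≤ ξ o - ξ (g • o)) :
    μ o T ≤ ENNReal.ofReal (Real.exp (-ω * β)) := by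
  have h5 := hμ.2.2.2.2 o (g • o)
  rw [h5, MeasureTheory.withDensity_apply _ hT]
  have hmono := MeasureTheory.setLIntegral_mono (μ := μ (g • o)) (s := T)
    (f := fun ξ : C(Y,ℝ) => ENNReal.ofReal (Real.exp (-ω * (ξ o - ξ (g • o)))))
    (g := fun _ => ENNReal.ofReal (Real.exp (-ω * β)))
    measurable_const ?_
  · refine le_trans hmono ?_
    rw [MeasureTheory.setLIntegral_const]
    calc ENNReal.ofReal (Real.exp (-ω * β)) * μ (g • o) T
        ≤ ENNReal.ofReal (Real.exp (-ω * β)) * μ (g • o) Set.univ := by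
          exact mul_le_mul_right (measure_mono (Set.subset_univ _)) _
      _ = ENNReal.ofReal (Real.exp (-ω * β)) := by
          rw [mass_one o ω μ hμ g, mul_one]
  · intro ξ hξ
    apply ENNReal.ofReal_le_ofReal
    apply Real.exp_le_exp.mpr
    have := hTsub ξ hξ
    nlinarith [this, hω]

/-- Pull back along the boundary action. -/
lemma map_lower (hμ : IsConformalDensity G o ω μ) (g : G) (S : Set C(Y,ℝ)) :
    μ o ((horoAct o g) ⁻¹' S) ≤ μ (g • o) S := by
  rw [← hμ.2.2.2.1 g o]
  exact Measure.le_map_apply (horoAct_continuous o g).measurable.aemeasurable S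

/-- Total integral identity for the conformal weight. -/
lemma mass_int (hμ : IsConformalDensity G o ω μ) (g : G) :
    ∫⁻ ξ, ENNReal.ofReal (Real.exp (-ω * (ξ (g • o) - ξ o))) ∂(μ o) = 1 := by
  have h5 := hμ.2.2.2.2 (g • o) o
  have h1 : μ (g • o) Set.univ = 1 := mass_one o ω μ hμ g
  rw [h5, MeasureTheory.withDensity_apply _ MeasurableSet.univ,
    MeasureTheory.setLIntegral_univ] at h1
  exact h1

open ShadowGeo in
/-- Key positivity: the set of horopoints approached through points projecting far down
the axis has positive measure. -/
lemma lambda_pos [ProperSpace Y] (hY : GeodesicSpace Y) (hiso : IsometricAction G Y)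
    (hω : 0 < ω) (hμ : IsConformalDensity G o ω μ)
    (h : G) (ax : Axis Y) (hpt : ∀ n : ℤ, ax.pt n = h ^ n • o) :
    0 < μ o {ξ : C(Y,ℝ) | IsHoroPoint o ξ ∧ ∃ u : ℕ → Y,
      (∀ n, u n ∈ {z : Y | ∃ b : ℤ, (b:ℝ) ≤ -(3 * ax.s0) ∧ ax.pt b ∈ projSet ax.A z}) ∧
      HoroConv o u ξ} := by
  have hpt0 : ax.pt 0 = o := by rw [hpt 0, zpow_zero, one_smul]
  set GoodM : Set Y := {z : Y | ∃ b : ℤ, (b:ℝ) ≤ -(3 * ax.s0) ∧ ax.pt b ∈ projSet ax.A z}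
    with hGooddef
  set Λ : Set C(Y,ℝ) := {ξ : C(Y,ℝ) | IsHoroPoint o ξ ∧ ∃ u : ℕ → Y,
      (∀ n, u n ∈ GoodM) ∧ HoroConv o u ξ} with hΛdef
  rw [pos_iff_ne_zero]
  intro hΛ0
  -- a measurable null superset of the bad set
  have hnullU : μ o (Λ ∪ {ξ : C(Y,ℝ) | ¬ IsHoroPoint o ξ}) = 0 := by
    apply le_antisymm _ zero_le
    calc μ o (Λ ∪ {ξ : C(Y,ℝ) | ¬ IsHoroPoint o ξ})
        ≤ μ o Λ + μ o {ξ : C(Y,ℝ) | ¬ IsHoroPoint o ξ} := measure_union_le _ _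
      _ = 0 := by rw [hΛ0, hμ.2.1 o, add_zero]
  obtain ⟨B, hBsub, hBmeas, hB0⟩ := exists_measurable_superset_of_null hnullU
  -- pointwise linear growth off B
  have key : ∀ ξ : C(Y,ℝ), ξ ∉ B → ξ o = 0 ∧
      ∀ m : ℕ, (m:ℝ)/ax.c - ax.kappa ≤ ξ (ax.pt (-(m:ℤ))) := by
    intro ξ hξB
    have hξΛ : ξ ∉ Λ := fun hc => hξB (hBsub (Or.inl hc))
    have hhoro : IsHoroPoint o ξ := by
      by_contra hc
      exact hξB (hBsub (Or.inr hc))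
    have h0 : ξ o = 0 := (horoCpt_props hhoro.1).1
    refine ⟨h0, fun m => ?_⟩
    obtain ⟨u, hu⟩ := exists_seq_of_mem_horoCpt hhoro.1
    have hnotfreq : ¬ (∃ᶠ n in Filter.atTop, u n ∈ GoodM) := by
      intro hfreq
      obtain ⟨φ, hφmono, hφmem⟩ := extraction_of_frequently_atTop hfreq
      apply hξΛ
      refine ⟨hhoro, u ∘ φ, hφmem, ?_⟩
      exact hu.comp (hφmono.tendsto_atTop)
    rw [Filter.not_frequently] at hnotfreq
    obtain ⟨N, hN⟩ := Filter.eventually_atTop.mp hnotfreq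
    have hbound : ∀ n, N ≤ n →
        (m:ℝ)/ax.c - ax.kappa ≤ dist (ax.pt (-(m:ℤ))) (u n) - dist o (u n) := by
      intro n hn
      have hVB := ax.valueBound hY (z := u n) (by
        intro hcon
        exact (hN n hn) hcon) m
      rwa [hpt0] at hVB
    have htend := horoConv_eval hu (ax.pt (-(m:ℤ)))
    exact ge_of_tendsto htend (Filter.eventually_atTop.mpr ⟨N, hbound⟩)
  -- the contradiction via total mass
  set m : ℕ := ⌈ax.kappa * ax.c⌉₊ + 1 with hmdef
  have hgm : h ^ (-(m:ℤ)) • o = ax.pt (-(m:ℤ)) := (hpt _).symm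
  have hint := mass_int o ω μ hμ (h ^ (-(m:ℤ)))
  rw [hgm] at hint
  set W : C(Y,ℝ) → ENNReal :=
    fun ξ => ENNReal.ofReal (Real.exp (-ω * (ξ (ax.pt (-(m:ℤ))) - ξ o))) with hWdef
  have hWmeas : Measurable W := by
    apply (ENNReal.continuous_ofReal.comp (Real.continuous_exp.comp
      (continuous_const.mul ((continuous_eval_const _).sub
        (continuous_eval_const o))))).measurable
  have hsplit : (∫⁻ ξ in B, W ξ ∂(μ o)) + (∫⁻ ξ in Bᶜ, W ξ ∂(μ o)) = ∫⁻ ξ, W ξ ∂(μ o) :=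
    MeasureTheory.lintegral_add_compl W hBmeas
  have hB0' : ∫⁻ ξ in B, W ξ ∂(μ o) = 0 := MeasureTheory.setLIntegral_measure_zero _ _ hB0
  have hBc : ∫⁻ ξ in Bᶜ, W ξ ∂(μ o) ≤
      ENNReal.ofReal (Real.exp (ω * ax.kappa - ω * (m:ℝ)/ax.c)) := by
    have hmono := MeasureTheory.setLIntegral_mono (μ := μ o) (s := Bᶜ)
      (f := W)
      (g := fun _ => ENNReal.ofReal (Real.exp (ω * ax.kappa - ω * (m:ℝ)/ax.c)))
      measurable_const ?_
    · refine le_trans hmono ?_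
      rw [MeasureTheory.setLIntegral_const]
      calc ENNReal.ofReal (Real.exp (ω * ax.kappa - ω * (m:ℝ)/ax.c)) * μ o Bᶜ
          ≤ ENNReal.ofReal (Real.exp (ω * ax.kappa - ω * (m:ℝ)/ax.c)) * μ o Set.univ :=
            mul_le_mul_right (measure_mono (Set.subset_univ _)) _
        _ = ENNReal.ofReal (Real.exp (ω * ax.kappa - ω * (m:ℝ)/ax.c)) := by
            rw [hμ.2.2.1, mul_one]
    · intro ξ hξ
      obtain ⟨h0, hgrow⟩ := key ξ hξ
      rw [hWdef]
      apply ENNReal.ofReal_le_ofReal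
      apply Real.exp_le_exp.mpr
      have := hgrow m
      rw [h0]
      have hc := ax.c_pos
      have h1 : ω * ((m:ℝ)/ax.c - ax.kappa) ≤ ω * (ξ (ax.pt (-(m:ℤ))) - 0) := by
        apply mul_le_mul_of_nonneg_left _ (le_of_lt hω)
        linarith
      have h2 : ω * ((m:ℝ)/ax.c) - ω * ax.kappa ≤ ω * (ξ (ax.pt (-(m:ℤ))) - 0) := by
        calc ω * ((m:ℝ)/ax.c) - ω * ax.kappa = ω * ((m:ℝ)/ax.c - ax.kappa) := by ring
          _ ≤ _ := h1
      have h4 : ω * ax.kappa - ω * (m:ℝ)/ax.c = -(ω * ((m:ℝ)/ax.c) - ω * ax.kappa) := by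
        ring
      linarith
  have hcontr : (1:ENNReal) ≤ ENNReal.ofReal (Real.exp (ω * ax.kappa - ω * (m:ℝ)/ax.c)) := by
    calc (1:ENNReal) = ∫⁻ ξ, W ξ ∂(μ o) := hint.symm
      _ = (∫⁻ ξ in B, W ξ ∂(μ o)) + (∫⁻ ξ in Bᶜ, W ξ ∂(μ o)) := hsplit.symm
      _ = ∫⁻ ξ in Bᶜ, W ξ ∂(μ o) := by rw [hB0', zero_add]
      _ ≤ _ := hBc
  have hexp : Real.exp (ω * ax.kappa - ω * (m:ℝ)/ax.c) < 1 := by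
    rw [Real.exp_lt_one_iff]
    have hc := ax.c_pos
    have hm1 : ax.kappa * ax.c < (m:ℝ) := by
      have := Nat.le_ceil (ax.kappa * ax.c)
      have h2 : ((⌈ax.kappa * ax.c⌉₊ : ℕ) : ℝ) < (m:ℝ) := by
        rw [hmdef]
        push_cast
        linarith
      linarith
    rw [sub_neg]
    have h3 : ax.kappa < (m:ℝ) / ax.c := by
      rw [lt_div_iff₀ hc]
      linarith
    calc ω * ax.kappa < ω * ((m:ℝ)/ax.c) := mul_lt_mul_of_pos_left h3 hω
      _ = ω * (m:ℝ) / ax.c := by ring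
  have : (1:ENNReal) < 1 := lt_of_le_of_lt hcontr (by
    rw [← ENNReal.ofReal_one]
    exact ENNReal.ofReal_lt_ofReal_iff_of_nonneg (le_of_lt (Real.exp_pos _)) |>.mpr hexp)
  exact lt_irrefl _ this

open ShadowGeo in
/-- The main inclusion: horopoints approached through points projecting far up the axis
lie (after translating by `g`) in the partial shadow of `g • o`. -/
lemma preimage_sub [ProperSpace Y] (hY : GeodesicSpace Y) (hiso : IsometricAction G Y)
    (f₁ f₂ f₃ : G) (axx : Axis Y) (hpt0 : axx.pt 0 = o)
    (g : G) {aI : ℤ} (hproj : axx.pt aI ∈ projSet axx.A (g⁻¹ • o)) (haa : (aI:ℝ) ≤ axx.s0)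
    (r : ℝ) (hr : axx.rstar + dist o (f₁ • o) ≤ r) :
    {ξ : C(Y,ℝ) | IsHoroPoint o ξ ∧ ∃ u : ℕ → Y,
        (∀ n, u n ∈ {z : Y | ∃ b : ℤ, 3 * axx.s0 ≤ (b:ℝ) ∧ axx.pt b ∈ projSet axx.A z}) ∧
        HoroConv o u ξ} ⊆ (horoAct o g) ⁻¹' (partialShadow o o f₁ f₂ f₃ g r) := by
  rintro ξ ⟨hhoro, u, hu, hconv⟩
  show horoAct o g ξ ∈ partialShadow o o f₁ f₂ f₃ g r
  refine ⟨isHoroPoint_horoAct hiso g hhoro, fun n => g • u n, fun n => ?_,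
    horoConv_smul hiso hconv g⟩
  obtain ⟨b, hb, hbproj⟩ := hu n
  obtain ⟨gd⟩ := exists_geod hY (g⁻¹ • o) (u n)
  obtain ⟨t, htIcc, htd⟩ := axx.cone hproj haa hbproj hb gd
  rw [hpt0] at htd
  have hgeo := smul_isGeodesicIn hiso gd.isGeodesicIn g
  rw [smul_inv_smul] at hgeo
  refine ⟨g • gd.set, hgeo, Or.inl ⟨?_, ?_⟩⟩
  · -- infDist (g • o) (g • gd.set) ≤ r
    have hmem : g • gd.f t ∈ g • gd.set := Set.smul_mem_smul_set (gd.mem_set htIcc)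
    have hd1 : dist (g • o) (g • gd.f t) = dist o (gd.f t) := smul_dist hiso g o (gd.f t)
    calc Metric.infDist (g • o) (g • gd.set) ≤ dist (g • o) (g • gd.f t) :=
          Metric.infDist_le_dist_of_mem hmem
      _ = dist o (gd.f t) := hd1
      _ = dist (gd.f t) o := dist_comm _ _
      _ ≤ r := le_trans htd (by linarith [dist_nonneg (x := o) (y := f₁ • o)])
  · -- infDist ((g * f₁) • o) (g • gd.set) ≤ r
    have hmem : g • gd.f t ∈ g • gd.set := Set.smul_mem_smul_set (gd.mem_set htIcc)
    have hd1 : dist ((g * f₁) • o) (g • gd.f t) = dist (f₁ • o) (gd.f t) := by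
      rw [mul_smul]
      exact smul_dist hiso g (f₁ • o) (gd.f t)
    calc Metric.infDist ((g * f₁) • o) (g • gd.set) ≤ dist ((g * f₁) • o) (g • gd.f t) :=
          Metric.infDist_le_dist_of_mem hmem
      _ = dist (f₁ • o) (gd.f t) := hd1
      _ ≤ dist (f₁ • o) o + dist o (gd.f t) := dist_triangle _ _ _
      _ ≤ r := by
          have h1 : dist (f₁ • o) o = dist o (f₁ • o) := dist_comm _ _
          have h2 : dist o (gd.f t) = dist (gd.f t) o := dist_comm _ _
          linarith [htd]

end MeasureAux

section GoodSetFlip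

variable {Y : Type*} [MetricSpace Y]

/-- The negative good set of the flipped axis is the positive good set. -/
lemma flip_goodset (ax : Axis Y) :
    {z : Y | ∃ b : ℤ, (b:ℝ) ≤ -(3 * ax.flip.s0) ∧ ax.flip.pt b ∈ projSet ax.flip.A z}
    = {z : Y | ∃ b : ℤ, 3 * ax.s0 ≤ (b:ℝ) ∧ ax.pt b ∈ projSet ax.A z} := by
  ext z
  constructor
  · rintro ⟨b, hb, hproj⟩
    refine ⟨-b, ?_, ?_⟩
    · have hs : ax.flip.s0 = ax.s0 := rfl
      rw [hs] at hb
      push_cast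
      linarith
    · rw [← ax.flip_A]
      exact hproj
  · rintro ⟨b, hb, hproj⟩
    refine ⟨-b, ?_, ?_⟩
    · have hs : ax.flip.s0 = ax.s0 := rfl
      rw [hs]
      push_cast
      linarith
    · rw [ax.flip_A]
      show ax.pt (- -b) ∈ projSet ax.A z
      rw [neg_neg]
      exact hproj

/-- The negative good set is the positive good set of the flipped axis. -/
lemma goodset_flip (ax : Axis Y) :
    {z : Y | ∃ b : ℤ, (b:ℝ) ≤ -(3 * ax.s0) ∧ ax.pt b ∈ projSet ax.A z}
    = {z : Y | ∃ b : ℤ, 3 * ax.flip.s0 ≤ (b:ℝ) ∧ ax.flip.pt b ∈ projSet ax.flip.A z} := by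
  ext z
  constructor
  · rintro ⟨b, hb, hproj⟩
    refine ⟨-b, ?_, ?_⟩
    · have hs : ax.flip.s0 = ax.s0 := rfl
      rw [hs]
      push_cast
      linarith
    · rw [ax.flip_A]
      show ax.pt (- -b) ∈ projSet ax.A z
      rw [neg_neg]
      exact hproj
  · rintro ⟨b, hb, hproj⟩
    refine ⟨-b, ?_, ?_⟩
    · have hs : ax.flip.s0 = ax.s0 := rfl
      rw [hs] at hb
      push_cast
      linarith
    · rw [← ax.flip_A]
      exact hproj

end GoodSetFlip



end ShadowAux

/-- the Shadow Lemma on the horofunction boundary: for an `ω`-dimensional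
`G`-equivariant conformal density and every admissible triple with large enough minimal
displacement, `μ_o(Π_o^F(go,r)) ≍ e^{-ω d(o,go)}` for all large `r`. -/
theorem statement15 {Y G : Type*} [MetricSpace Y] [ProperSpace Y]
    [Group G] [MulAction G Y] [Countable G] [ContinuousConstSMul G Y]
    [MeasurableSpace C(Y, ℝ)] [BorelSpace C(Y, ℝ)]
    (hY : GeodesicSpace Y) (hiso : IsometricAction G Y)
    (hprop : ProperAction G Y) (hne : NonElementary G) (o : Y)
    (hcontr : ∃ f : G, IsContractingEltAny o f)
    (C B₀ : ℝ) (hC : 1 ≤ C) (hB : 0 < B₀)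
    (ω : ℝ) (hω : 0 < ω) (μ : Y → MeasureTheory.Measure C(Y, ℝ))
    (hμ : IsConformalDensity G o ω μ) :
    ∃ L : ℝ, 0 < L ∧
      ∀ f₁ f₂ f₃ : G, IsAdmissibleTriple o C B₀ f₁ f₂ f₃ →
        L ≤ dist o (f₁ • o) → L ≤ dist o (f₂ • o) → L ≤ dist o (f₃ • o) →
        ∃ r₀ c₁ : ℝ, 0 < r₀ ∧ 0 < c₁ ∧ ∀ r : ℝ, r₀ ≤ r → ∃ c₂ : ℝ, 0 < c₂ ∧
          ∀ g : G,
            ENNReal.ofReal (c₁ * Real.exp (-ω * dist o (g • o))) ≤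
                μ o (partialShadow o o f₁ f₂ f₃ g r) ∧
            μ o (partialShadow o o f₁ f₂ f₃ g r) ≤ μ o (usualShadow o o (g • o) r) ∧
            μ o (usualShadow o o (g • o) r) ≤
                ENNReal.ofReal (c₂ * Real.exp (-ω * dist o (g • o))) := by
  classical
  refine ⟨1, zero_lt_one, ?_⟩
  intro f₁ f₂ f₃ hF _ _ _
  -- extract the contraction data of f₁
  obtain ⟨C₁, hC₁, hICE⟩ := hF.2.2.2.1
  obtain ⟨-, ⟨c, hc, hQI⟩, hcontrS⟩ := hICE
  have hrange : Set.range (fun n : ℤ => f₁ ^ n • o) = cyclicOrbit o f₁ := by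
    ext y
    constructor
    · rintro ⟨n, rfl⟩; exact ⟨n, rfl⟩
    · rintro ⟨n, hn⟩; exact ⟨n, hn.symm⟩
  set ax : Axis Y :=
    { pt := fun n => f₁ ^ n • o
      c := c
      C1 := C₁
      hc := hc
      hC := hC₁
      lower := fun m n => (hQI m n).1
      upper := fun m n => (hQI m n).2
      contr := by rw [hrange]; exact hcontrS } with haxdef
  have hpt : ∀ n : ℤ, ax.pt n = f₁ ^ n • o := fun n => rfl
  have hpt0 : ax.pt 0 = o := by
    show f₁ ^ (0:ℤ) • o = o
    rw [zpow_zero, one_smul]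
  have hpt' : ∀ n : ℤ, ax.flip.pt n = f₁⁻¹ ^ n • o := by
    intro n
    show f₁ ^ (-n) • o = f₁⁻¹ ^ n • o
    rw [inv_zpow']
  have hflippt0 : ax.flip.pt 0 = o := by
    show ax.pt (-0) = o
    rw [neg_zero]
    exact hpt0
  -- the two limit sets with positive measure
  set SP : Set C(Y,ℝ) := {ξ : C(Y,ℝ) | IsHoroPoint o ξ ∧ ∃ u : ℕ → Y,
      (∀ n, u n ∈ {z : Y | ∃ b : ℤ, 3 * ax.s0 ≤ (b:ℝ) ∧ ax.pt b ∈ projSet ax.A z}) ∧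
      HoroConv o u ξ} with hSPdef
  set SM : Set C(Y,ℝ) := {ξ : C(Y,ℝ) | IsHoroPoint o ξ ∧ ∃ u : ℕ → Y,
      (∀ n, u n ∈ {z : Y | ∃ b : ℤ, 3 * ax.flip.s0 ≤ (b:ℝ) ∧
        ax.flip.pt b ∈ projSet ax.flip.A z}) ∧
      HoroConv o u ξ} with hSMdef
  have hposP : 0 < μ o SP := by
    have h1 := lambda_pos o ω μ hY hiso hω hμ f₁⁻¹ ax.flip hpt'
    have h2 : {ξ : C(Y,ℝ) | IsHoroPoint o ξ ∧ ∃ u : ℕ → Y,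
        (∀ n, u n ∈ {z : Y | ∃ b : ℤ, (b:ℝ) ≤ -(3 * ax.flip.s0) ∧
          ax.flip.pt b ∈ projSet ax.flip.A z}) ∧ HoroConv o u ξ} = SP := by
      rw [hSPdef, flip_goodset ax]
    rwa [h2] at h1
  have hposM : 0 < μ o SM := by
    have h1 := lambda_pos o ω μ hY hiso hω hμ f₁ ax hpt
    have h2 : {ξ : C(Y,ℝ) | IsHoroPoint o ξ ∧ ∃ u : ℕ → Y,
        (∀ n, u n ∈ {z : Y | ∃ b : ℤ, (b:ℝ) ≤ -(3 * ax.s0) ∧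
          ax.pt b ∈ projSet ax.A z}) ∧ HoroConv o u ξ} = SM := by
      rw [hSMdef, goodset_flip ax]
    rwa [h2] at h1
  set ε : ENNReal := min (μ o SP) (μ o SM) with hεdef
  have hε0 : 0 < ε := lt_min hposP hposM
  have hεle1 : ε ≤ 1 := by
    calc ε ≤ μ o SP := min_le_left _ _
      _ ≤ μ o Set.univ := measure_mono (Set.subset_univ _)
      _ = 1 := hμ.2.2.1
  have hεtop : ε ≠ ⊤ := ne_top_of_le_ne_top ENNReal.one_ne_top hεle1
  have hc₁pos : 0 < ε.toReal := ENNReal.toReal_pos (ne_of_gt hε0) hεtop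
  refine ⟨ax.rstar + dist o (f₁ • o) + 1, ε.toReal, ?_, hc₁pos, ?_⟩
  · have := ax.rstar_nonneg
    have := dist_nonneg (x := o) (y := f₁ • o)
    linarith
  intro r hr
  refine ⟨Real.exp (2 * ω * r), Real.exp_pos _, ?_⟩
  intro g
  set D := dist o (g • o) with hDdef
  -- ================= middle inequality =================
  have hmid : μ o (partialShadow o o f₁ f₂ f₃ g r) ≤ μ o (usualShadow o o (g • o) r) := by
    apply measure_mono
    rintro ξ ⟨hhoro, u, hu, hconv⟩
    refine ⟨hhoro, u, fun n => ?_, hconv⟩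
    obtain ⟨γ, hγ, hbar⟩ := hu n
    refine ⟨γ, hγ, ?_⟩
    have hinf : Metric.infDist (g • o) γ ≤ r := by
      rcases hbar with h | h | h <;> exact h.1
    obtain ⟨f, h0, hd, hisof, himg⟩ := hγ
    set gd : ShadowGeo.Geod Y o (u n) := ⟨f, h0, hd, hisof⟩ with hgddef
    have hγeq : γ = gd.set := himg
    have hγcpt : IsCompact γ := by
      rw [hγeq]
      apply isCompact_Icc.image_of_continuousOn
      apply LipschitzOnWith.continuousOn (K := 1)
      apply LipschitzOnWith.of_dist_le_mul
      intro s hs t ht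
      rw [gd.dist_eq hs ht, NNReal.coe_one, one_mul, Real.dist_eq]
    have hγne : γ.Nonempty := by
      rw [hγeq]
      exact ⟨o, gd.mem_left⟩
    obtain ⟨p, hpγ, hpd⟩ := hγcpt.exists_infDist_eq_dist hγne (g • o)
    refine ⟨p, hpγ, ?_⟩
    rw [dist_comm, ← hpd]
    exact hinf
  -- ================= upper inequality =================
  have hup : μ o (usualShadow o o (g • o) r) ≤
      ENNReal.ofReal (Real.exp (2 * ω * r) * Real.exp (-ω * D)) := by
    set T : Set C(Y,ℝ) := {ξ : C(Y,ℝ) | ξ (g • o) - ξ o ≤ 2*r - D} with hTdef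
    have hTmeas : MeasurableSet T := by
      apply IsClosed.measurableSet
      exact isClosed_le ((continuous_eval_const (g • o)).sub
        (continuous_eval_const o)) continuous_const
    have hUT : usualShadow o o (g • o) r ⊆ T := by
      rintro ξ ⟨hhoro, u, hu, hconv⟩
      have hξo : ξ o = 0 := (horoCpt_props hhoro.1).1
      have hbound : ∀ n, dist (g • o) (u n) - dist o (u n) ≤ 2*r - D := by
        intro n
        obtain ⟨γ, hγ, p, hpγ, hpd⟩ := hu n
        obtain ⟨f, h0, hd, hisof, himg⟩ := hγ
        set gd : ShadowGeo.Geod Y o (u n) := ⟨f, h0, hd, hisof⟩ with hgddef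
        rw [himg] at hpγ
        obtain ⟨s, hsIcc, rfl⟩ := hpγ
        have hds : dist o (gd.f s) = s := gd.dist_left hsIcc
        have hdr : dist (gd.f s) (u n) = dist o (u n) - s := gd.dist_right hsIcc
        have h1 : dist (g • o) (u n) ≤ dist (g • o) (gd.f s) + dist (gd.f s) (u n) :=
          dist_triangle _ _ _
        have h2 : D ≤ dist o (gd.f s) + dist (gd.f s) (g • o) := dist_triangle _ _ _
        have h3 : dist (g • o) (gd.f s) = dist (gd.f s) (g • o) := dist_comm _ _
        have hpd' : dist (gd.f s) (g • o) ≤ r := hpd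
        rw [hdr] at h1
        rw [hds] at h2
        linarith
      have htend := horoConv_eval hconv (g • o)
      have hlim : ξ (g • o) ≤ 2*r - D :=
        le_of_tendsto htend (Filter.Eventually.of_forall hbound)
      show ξ (g • o) - ξ o ≤ 2*r - D
      rw [hξo]
      linarith
    have hconf := conf_upper o ω μ hμ hω g hTmeas (D - 2*r) ?_
    · calc μ o (usualShadow o o (g • o) r) ≤ μ o T := measure_mono hUT
        _ ≤ ENNReal.ofReal (Real.exp (-ω * (D - 2*r))) := hconf
        _ = ENNReal.ofReal (Real.exp (2 * ω * r) * Real.exp (-ω * D)) := by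
            rw [← Real.exp_add]
            congr 1
            ring
    · intro ξ hξ
      have : ξ (g • o) - ξ o ≤ 2*r - D := hξ
      linarith
  -- ================= lower inequality =================
  have hlow : ENNReal.ofReal (ε.toReal * Real.exp (-ω * D)) ≤
      μ o (partialShadow o o f₁ f₂ f₃ g r) := by
    -- choose the side according to the projection of g⁻¹ • o
    obtain ⟨w, hw⟩ := ax.proj_nonempty (g⁻¹ • o)
    obtain ⟨aI, haIeq⟩ := (ax.proj_mem_A hw : w ∈ Set.range ax.pt)
    rw [← haIeq] at hw
    have hrr : ax.rstar + dist o (f₁ • o) ≤ r := by linarith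
    have hexists : ∃ S : Set C(Y,ℝ), ε ≤ μ o S ∧
        S ⊆ (horoAct o g) ⁻¹' (partialShadow o o f₁ f₂ f₃ g r) := by
      by_cases hside : (aI:ℝ) ≤ ax.s0
      · exact ⟨SP, min_le_left _ _,
          preimage_sub o hY hiso f₁ f₂ f₃ ax hpt0 g hw hside r hrr⟩
      · push_neg at hside
        have hwflip : ax.flip.pt (-aI) ∈ projSet ax.flip.A (g⁻¹ • o) := by
          rw [ax.flip_A]
          show ax.pt (- -aI) ∈ projSet ax.A (g⁻¹ • o)
          rw [neg_neg]
          exact hw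
        have haa : ((-aI : ℤ):ℝ) ≤ ax.flip.s0 := by
          have hs : ax.flip.s0 = ax.s0 := rfl
          rw [hs]
          push_cast
          linarith [ax.s0_pos]
        have hrr' : ax.flip.rstar + dist o (f₁ • o) ≤ r := by
          have hs : ax.flip.rstar = ax.rstar := rfl
          rw [hs]
          exact hrr
        exact ⟨SM, min_le_right _ _,
          preimage_sub o hY hiso f₁ f₂ f₃ ax.flip hflippt0 g hwflip haa r hrr'⟩
    obtain ⟨S, hεS, hsub⟩ := hexists
    have h1 : ε ≤ μ o ((horoAct o g) ⁻¹' (partialShadow o o f₁ f₂ f₃ g r)) :=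
      le_trans hεS (measure_mono hsub)
    have h2 := map_lower o ω μ hμ g (partialShadow o o f₁ f₂ f₃ g r)
    have h3 := conf_lower o ω μ hμ hω g (partialShadow o o f₁ f₂ f₃ g r)
    calc ENNReal.ofReal (ε.toReal * Real.exp (-ω * D))
        = ENNReal.ofReal (Real.exp (-ω * D)) * ε := by
          rw [ENNReal.ofReal_mul ENNReal.toReal_nonneg, ENNReal.ofReal_toReal hεtop,
            mul_comm]
      _ ≤ ENNReal.ofReal (Real.exp (-ω * D)) * μ (g • o) (partialShadow o o f₁ f₂ f₃ g r) :=
          mul_le_mul_right (le_trans h1 h2) _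
      _ ≤ μ o (partialShadow o o f₁ f₂ f₃ g r) := h3
  exact ⟨hlow, hmid, hup⟩

end ConfDyn
end
end
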